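/- arXiv:2001.07007 — 8 statements merged into one kernel-verified Lean document; each statement's English description precedes it below -/
import Mathlib

section
/- Let X be a real separated locally convex space, f ∈ Γ(X), x₀ ∈ dom f, u ∈ X and u* ∈ X*. Then f_∞(u) = ⟨u, u*⟩ and f_∞(−u) = −⟨u, u*⟩ hold simultaneously if and only if f(x₀ + t·u) − f(x₀) − t⟨u, u*⟩ = 0 for every t ∈ ℝ. -/
open Filter Topology Set Pointwise TopologicalSpace

noncomputable section

section Defs

variable {E : Type*} [AddCommGroup E] [Module ℝ E]

/-- Recession function of `f` based at `x₀ ∈ dom f`, as the supremum of the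
(nondecreasing) difference quotients `(f (x₀ + t • u) - f x₀) / t`, `t > 0`. -/
def recAt (f : E → EReal) (x₀ u : E) : EReal :=
  ⨆ t ∈ Set.Ioi (0 : ℝ), ((t⁻¹ : ℝ) : EReal) * (f (x₀ + t • u) - f x₀)

/-- Sublinear function: positively homogeneous and subadditive. -/
def SublinearFn (g : E → EReal) : Prop :=
  g 0 = 0 ∧ (∀ x : E, ∀ t : ℝ, 0 < t → g (t • x) = (t : EReal) * g x) ∧
    ∀ x y : E, g (x + y) ≤ g x + g y

variable [TopologicalSpace E]

/-- `Γ(E)`: proper lower semicontinuous convex functions. -/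
def GammaFn (f : E → EReal) : Prop :=
  (∃ x, f x ≠ ⊤) ∧ (∀ x, f x ≠ ⊥) ∧
    Convex ℝ {p : E × ℝ | f p.1 ≤ (p.2 : EReal)} ∧ LowerSemicontinuous f

/-- Subdifferential at `0`, as a subset of the weak* dual. -/
def subdiff0 (g : E → EReal) : Set (WeakDual ℝ E) :=
  {xs | ∀ x, (xs x : EReal) ≤ g x}

/-- Fenchel conjugate. -/
def conjFn (f : E → EReal) (xs : WeakDual ℝ E) : EReal :=
  ⨆ x, ((xs x : EReal) - f x)

/-- Domain of the conjugate. -/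
def domConj (f : E → EReal) : Set (WeakDual ℝ E) := {xs | conjFn f xs ≠ ⊤}

/-- `xs ∈ ∂f(x)`. -/
def inSubdiff (f : E → EReal) (xs : WeakDual ℝ E) (x : E) : Prop :=
  f x ≠ ⊤ ∧ f x ≠ ⊥ ∧ ∀ x' : E, ((xs x' - xs x : ℝ) : EReal) + f x ≤ f x'

/-- Directionally coercive function. -/
def DirCoercive (f : E → EReal) : Prop :=
  ∀ x : E, ∀ u : E, u ≠ 0 → Filter.Tendsto (fun t : ℝ => f (x + t • u)) Filter.atTop (nhds ⊤)

/-- The set `L_{x*} = {x | g(x) = ⟨x, x*⟩ and g(-x) = -⟨x, x*⟩}`. -/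
def LxSet (g : E → EReal) (xs : WeakDual ℝ E) : Set E :=
  {x | g x = (xs x : EReal) ∧ g (-x) = ((-(xs x) : ℝ) : EReal)}

end Defs

section QRI

variable {F : Type*} [AddCommGroup F] [Module ℝ F] [TopologicalSpace F]

/-- The cone `ℝ₊ (A - a)`. -/
def coneGen (A : Set F) (a : F) : Set F :=
  {x | ∃ t : ℝ, 0 ≤ t ∧ ∃ b ∈ A, x = t • (b - a)}

/-- Quasi-relative interior. -/
def qri (A : Set F) : Set F :=
  {a ∈ A | ∃ S : Submodule ℝ F, closure (coneGen A a) = (S : Set F)}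

/-- Quasi-interior. -/
def qi (A : Set F) : Set F :=
  {a ∈ A | closure (coneGen A a) = Set.univ}

/-- Algebraic core of a set. -/
def coreSet (A : Set F) : Set F :=
  {a : F | ∀ u : F, ∃ δ : ℝ, 0 < δ ∧ ∀ t ∈ Set.Icc (0 : ℝ) δ, a + t • u ∈ A}

end QRI

section Aux
variable {Y : Type*} [AddCommGroup Y] [Module ℝ Y] [TopologicalSpace Y]

lemma aux_mid (f : Y → EReal) (hconv : Convex ℝ {p : Y × ℝ | f p.1 ≤ (p.2 : EReal)})
    (x y : Y) (hx : f x ≠ ⊤) (hxb : f x ≠ ⊥) (hy : f y ≠ ⊤) (hyb : f y ≠ ⊥) :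
    f ((1/2 : ℝ) • x + (1/2 : ℝ) • y) ≤
      (((1/2) * (f x).toReal + (1/2) * (f y).toReal : ℝ) : EReal) := by
  have hmx : ((x, (f x).toReal) : Y × ℝ) ∈ {p : Y × ℝ | f p.1 ≤ (p.2 : EReal)} := by
    simp [Set.mem_setOf_eq, EReal.le_coe_toReal hx]
  have hmy : ((y, (f y).toReal) : Y × ℝ) ∈ {p : Y × ℝ | f p.1 ≤ (p.2 : EReal)} := by
    simp [Set.mem_setOf_eq, EReal.le_coe_toReal hy]
  have := hconv hmx hmy (by norm_num : (0:ℝ) ≤ 1/2) (by norm_num : (0:ℝ) ≤ 1/2) (by norm_num)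
  simpa [Prod.smul_mk, Prod.mk_add_mk, smul_eq_mul] using this

end Aux

section Aux2
variable {Y : Type*} [AddCommGroup Y] [Module ℝ Y] [TopologicalSpace Y]

set_option linter.unusedSectionVars false in
lemma aux_bound (f : Y → EReal) (x₀ u : Y) (a v : ℝ) (ha : f x₀ = (a : EReal))
    (hbot : ∀ x, f x ≠ ⊥) (h : recAt f x₀ u ≤ (v : EReal)) (t : ℝ) (ht : 0 < t) :
    f (x₀ + t • u) ≠ ⊤ ∧ (f (x₀ + t • u)).toReal ≤ a + t * v := by
  have hle : ((t⁻¹ : ℝ) : EReal) * (f (x₀ + t • u) - f x₀) ≤ (v : EReal) :=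
    le_trans (le_iSup₂ (f := fun s (_ : s ∈ Set.Ioi (0:ℝ)) =>
      ((s⁻¹ : ℝ) : EReal) * (f (x₀ + s • u) - f x₀)) t ht) h
  have htop : f (x₀ + t • u) ≠ ⊤ := by
    intro hT
    rw [hT, ha, EReal.top_sub_coe,
      EReal.coe_mul_top_of_pos (inv_pos.mpr ht)] at hle
    exact (EReal.coe_lt_top v).not_ge hle
  refine ⟨htop, ?_⟩
  have hb : ((f (x₀ + t • u)).toReal : EReal) = f (x₀ + t • u) :=
    EReal.coe_toReal htop (hbot _)
  set b := (f (x₀ + t • u)).toReal with hbdef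
  rw [← hb, ha, ← EReal.coe_sub, ← EReal.coe_mul, EReal.coe_le_coe_iff] at hle
  have h1 : t * (t⁻¹ * (b - a)) ≤ t * v := mul_le_mul_of_nonneg_left hle ht.le
  rw [← mul_assoc, mul_inv_cancel₀ ht.ne', one_mul] at h1
  linarith

set_option linter.unusedSectionVars false in
lemma aux_eq (f : Y → EReal) (hconv : Convex ℝ {p : Y × ℝ | f p.1 ≤ (p.2 : EReal)})
    (hbot : ∀ x, f x ≠ ⊥) (x₀ u : Y) (a v : ℝ) (ha : f x₀ = (a : EReal))
    (t : ℝ) (ht : 0 < t)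
    (hbtop : f (x₀ + t • u) ≠ ⊤) (hb : (f (x₀ + t • u)).toReal ≤ a + t * v)
    (hctop : f (x₀ + t • (-u)) ≠ ⊤) (hc : (f (x₀ + t • (-u))).toReal ≤ a - t * v) :
    f (x₀ + t • u) = ((a + t * v : ℝ) : EReal) ∧
      f (x₀ + t • (-u)) = ((a - t * v : ℝ) : EReal) := by
  have hmidpt : (1/2 : ℝ) • (x₀ + t • u) + (1/2 : ℝ) • (x₀ + t • (-u)) = x₀ := by
    rw [smul_neg]; module
  have hmid := aux_mid f hconv (x₀ + t • u) (x₀ + t • (-u)) hbtop (hbot _) hctop (hbot _)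
  rw [hmidpt, ha, EReal.coe_le_coe_iff] at hmid
  have hb' : ((f (x₀ + t • u)).toReal : EReal) = f (x₀ + t • u) :=
    EReal.coe_toReal hbtop (hbot _)
  have hc' : ((f (x₀ + t • (-u))).toReal : EReal) = f (x₀ + t • (-u)) :=
    EReal.coe_toReal hctop (hbot _)
  constructor
  · rw [← hb']; exact congrArg Real.toEReal (by linarith)
  · rw [← hc']; exact congrArg Real.toEReal (by linarith)

end Aux2

variable {X : Type*}

theorem stmt1 [AddCommGroup X] [Module ℝ X] [TopologicalSpace X] [IsTopologicalAddGroup X]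
    [ContinuousSMul ℝ X] [LocallyConvexSpace ℝ X] [T2Space X]
    (f : X → EReal) (hf : GammaFn f) (x₀ : X) (hx₀ : f x₀ ≠ ⊤)
    (u : X) (us : WeakDual ℝ X) :
    (recAt f x₀ u = (us u : EReal) ∧ recAt f x₀ (-u) = ((-(us u) : ℝ) : EReal)) ↔
      ∀ t : ℝ, f (x₀ + t • u) = f x₀ + ((t * us u : ℝ) : EReal) := by
  obtain ⟨-, hbot, hconv, -⟩ := hf
  have ha : f x₀ = ((f x₀).toReal : EReal) := (EReal.coe_toReal hx₀ (hbot _)).symm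
  set a := (f x₀).toReal with hadef
  constructor
  · rintro ⟨h1, h2⟩ t
    rcases lt_trichotomy t 0 with htn | rfl | htp
    · have hs : 0 < -t := neg_pos.mpr htn
      obtain ⟨hb1, hb2⟩ := aux_bound f x₀ u a (us u) ha hbot h1.le (-t) hs
      obtain ⟨hc1, hc2⟩ := aux_bound f x₀ (-u) a (-(us u)) ha hbot h2.le (-t) hs
      have heq := aux_eq f hconv hbot x₀ u a (us u) ha (-t) hs hb1 hb2
        hc1 (by linarith)
      have hrw : x₀ + t • u = x₀ + (-t) • (-u) := by module
      rw [hrw, heq.2, ha, ← EReal.coe_add]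
      exact congrArg Real.toEReal (by ring)
    · simp [ha]
    · obtain ⟨hb1, hb2⟩ := aux_bound f x₀ u a (us u) ha hbot h1.le t htp
      obtain ⟨hc1, hc2⟩ := aux_bound f x₀ (-u) a (-(us u)) ha hbot h2.le t htp
      have heq := aux_eq f hconv hbot x₀ u a (us u) ha t htp hb1 hb2
        hc1 (by linarith)
      rw [heq.1, ha, ← EReal.coe_add]
  · intro h
    have key : ∀ (w : X) (vv : ℝ),
        (∀ t : ℝ, f (x₀ + t • w) = f x₀ + ((t * vv : ℝ) : EReal)) →
        recAt f x₀ w = (vv : EReal) := by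
      intro w vv hw
      have hterm : ∀ t ∈ Set.Ioi (0:ℝ),
          ((t⁻¹ : ℝ) : EReal) * (f (x₀ + t • w) - f x₀) = (vv : EReal) := by
        intro t ht
        have ht' : (0:ℝ) < t := ht
        rw [hw t, ha, ← EReal.coe_add, ← EReal.coe_sub, ← EReal.coe_mul]
        exact congrArg Real.toEReal (by field_simp; ring)
      refine le_antisymm (iSup₂_le fun t ht => (hterm t ht).le) ?_
      exact le_iSup₂_of_le 1 (by norm_num) (hterm 1 (by norm_num)).ge
    refine ⟨key u (us u) h, key (-u) (-(us u)) ?_⟩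
    intro t
    have hrw : x₀ + t • (-u) = x₀ + (-t) • u := by module
    rw [hrw, h (-t)]
    exact congrArg (f x₀ + ·) (congrArg Real.toEReal (by ring))
end
end

section
/- Let X be a real separated locally convex space and f ∈ Γ(X). Then: (a) f is directionally coercive if and only if {u ∈ X : f_∞(u) ≤ 0} = {0}; (b) f is essentially directionally coercive if and only if there exists x* ∈ X* such that {u ∈ X : f_∞(u) ≤ ⟨u, x*⟩} = {0}. -/
open Filter Topology Set Pointwise TopologicalSpace

noncomputable section

section Helpers

open Filter Topology Set

private lemma mulinv_nonpos_iff {t : ℝ} (ht : 0 < t) {D : EReal} :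
    ((t⁻¹ : ℝ) : EReal) * D ≤ 0 ↔ D ≤ 0 := by
  constructor
  · intro h
    have hD : D = (t : EReal) * (((t⁻¹:ℝ):EReal) * D) := by
      rw [← mul_assoc, ← EReal.coe_mul, mul_inv_cancel₀ ht.ne', EReal.coe_one, one_mul]
    rw [hD]
    exact mul_nonpos_of_nonneg_of_nonpos (by exact_mod_cast ht.le) h
  · intro h
    exact mul_nonpos_of_nonneg_of_nonpos (by exact_mod_cast (inv_pos.2 ht).le) h

private lemma recAt_le_iff' {E : Type*} [AddCommGroup E] [Module ℝ E] {f : E → EReal}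
    {z₀ u : E} {c : EReal} :
    recAt f z₀ u ≤ c ↔ ∀ t : ℝ, 0 < t → ((t⁻¹ : ℝ) : EReal) * (f (z₀ + t • u) - f z₀) ≤ c := by
  simp [recAt, iSup₂_le_iff, Set.mem_Ioi]

private lemma termB {t b rz r₀ : ℝ} (ht : 0 < t) {A : EReal} (hA : A ≠ ⊥) :
    ((t⁻¹ : ℝ) : EReal) * ((A - ((rz + t * b : ℝ) : EReal)) - ((r₀ - rz : ℝ) : EReal)) ≤ 0 ↔
      ((t⁻¹ : ℝ) : EReal) * (A - (r₀ : EReal)) ≤ (b : EReal) := by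
  induction A with
  | bot => simp at hA
  | coe a =>
      rw [show ((a : EReal) - ((rz + t * b : ℝ) : EReal)) = ((a - (rz + t * b) : ℝ) : EReal) from
          (EReal.coe_sub _ _).symm,
        show ((a : EReal) - (r₀ : EReal)) = ((a - r₀ : ℝ) : EReal) from (EReal.coe_sub _ _).symm,
        show (((a - (rz + t*b) : ℝ) : EReal) - ((r₀ - rz : ℝ) : EReal))
          = ((a - (rz + t*b) - (r₀ - rz) : ℝ) : EReal) from (EReal.coe_sub _ _).symm,
        ← EReal.coe_mul, ← EReal.coe_mul, ← EReal.coe_zero, EReal.coe_le_coe_iff,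
        EReal.coe_le_coe_iff]
      have hid : t⁻¹ * (a - (rz + t * b) - (r₀ - rz)) = t⁻¹ * (a - r₀) - b := by
        field_simp
        ring
      rw [hid, sub_nonpos]
  | top =>
      simp only [EReal.top_sub_coe,
        EReal.mul_top_of_pos (show (0:EReal) < ((t⁻¹:ℝ):EReal) by exact_mod_cast inv_pos.2 ht)]
      simp [top_le_iff]

variable {Y : Type*} [AddCommGroup Y] [Module ℝ Y] [TopologicalSpace Y] [IsTopologicalAddGroup Y]
    [ContinuousSMul ℝ Y]

private theorem partA (f : Y → EReal) (hbot : ∀ x, f x ≠ ⊥)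
    (hconv : Convex ℝ {p : Y × ℝ | f p.1 ≤ (p.2 : EReal)})
    (hlsc : LowerSemicontinuous f) (z₀ : Y) (hz₀ : f z₀ ≠ ⊤) :
    DirCoercive f ↔ {u : Y | recAt f z₀ u ≤ 0} = {0} := by
  obtain ⟨r₀, hr₀⟩ : ∃ r : ℝ, f z₀ = (r : EReal) :=
    ⟨(f z₀).toReal, (EReal.coe_toReal hz₀ (hbot z₀)).symm⟩
  have hkey : ∀ u : Y, recAt f z₀ u ≤ 0 ↔ ∀ t : ℝ, 0 < t → f (z₀ + t • u) ≤ f z₀ := by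
    intro u
    rw [recAt_le_iff']
    refine forall₂_congr fun t ht => ?_
    rw [mulinv_nonpos_iff ht, hr₀,
      EReal.sub_le_iff_le_add (Or.inl (EReal.coe_ne_bot r₀)) (Or.inl (EReal.coe_ne_top r₀)),
      zero_add]
  constructor
  · intro hc
    ext u
    simp only [Set.mem_setOf_eq, Set.mem_singleton_iff]
    constructor
    · intro hu
      by_contra hu0
      have htend := hc z₀ u hu0
      rw [EReal.tendsto_nhds_top_iff_real] at htend
      obtain ⟨t, ht1, ht2⟩ := ((htend r₀).and (eventually_gt_atTop 0)).exists
      exact absurd ((hkey u).1 hu t ht2) (by rw [hr₀]; exact not_le.2 ht1)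
    · rintro rfl
      rw [hkey]
      intro t ht
      simp
  · intro hset x u hu0
    rw [EReal.tendsto_nhds_top_iff_real]
    intro M
    by_contra hM
    rw [Filter.not_eventually] at hM
    set M' : ℝ := max M (r₀ + 1) with hM'def
    have hM'r : r₀ < M' := lt_of_lt_of_le (lt_add_one r₀) (le_max_right _ _)
    have hfreq : ∃ᶠ t : ℝ in atTop, f (x + t • u) ≤ (M' : EReal) := by
      refine hM.mono fun t h => ?_
      refine (not_lt.1 h).trans ?_
      exact_mod_cast le_max_left M (r₀ + 1)
    have hclaim : ∀ s : ℝ, 0 < s → f (z₀ + s • u) ≤ f z₀ := by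
      intro s hs
      by_contra hgt
      rw [not_le, hr₀] at hgt
      obtain ⟨c, hc1, hc2⟩ := EReal.exists_between_coe_real hgt
      have hcr : r₀ < c := by exact_mod_cast hc1
      have hnb := hlsc (z₀ + s • u) (c : EReal) hc2
      set lam0 : ℝ := min ((c - r₀) / (2 * (M' - r₀))) 1 with hlam0def
      have hlam0pos : 0 < lam0 := by
        exact lt_min (div_pos (by linarith) (by linarith)) one_pos
      have h1 : Tendsto (fun t : ℝ => s / t) atTop (𝓝 0) := by
        simpa [div_eq_mul_inv] using tendsto_inv_atTop_zero.const_mul s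
      have hcont : Tendsto (fun t : ℝ => z₀ + s • u + (s / t) • (x - z₀)) atTop
          (𝓝 (z₀ + s • u)) := by
        have h2 : Tendsto (fun t : ℝ => (s / t) • (x - z₀)) atTop (𝓝 ((0:ℝ) • (x - z₀))) :=
          h1.smul_const (x - z₀)
        rw [zero_smul] at h2
        simpa using (tendsto_const_nhds (x := z₀ + s • u) (f := atTop)).add h2
      have hev2 := hcont.eventually hnb
      have hev3 : ∀ᶠ t : ℝ in atTop, 0 < t ∧ s / t ≤ lam0 := by
        filter_upwards [eventually_gt_atTop 0, eventually_ge_atTop (s / lam0)] with t ht1 ht2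
        refine ⟨ht1, ?_⟩
        rw [div_le_iff₀ ht1]
        calc s = lam0 * (s / lam0) := by field_simp
          _ ≤ lam0 * t := mul_le_mul_of_nonneg_left ht2 hlam0pos.le
      obtain ⟨t, htle, htnb, ht0, htlam⟩ := (hfreq.and_eventually (hev2.and hev3)).exists
      set lam : ℝ := s / t with hlamdef
      have hlampos : 0 < lam := div_pos hs ht0
      have hle1 : lam ≤ 1 := htlam.trans (min_le_right _ _)
      have hepi1 : ((z₀, r₀) : Y × ℝ) ∈ {p : Y × ℝ | f p.1 ≤ (p.2 : EReal)} := by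
        simp only [Set.mem_setOf_eq, hr₀, le_refl]
      have hepi2 : ((x + t • u, M') : Y × ℝ) ∈ {p : Y × ℝ | f p.1 ≤ (p.2 : EReal)} := htle
      have hcomb := hconv hepi1 hepi2 (by linarith : (0:ℝ) ≤ 1 - lam) hlampos.le (by ring)
      simp only [Prod.smul_mk, Prod.mk_add_mk, Set.mem_setOf_eq, smul_eq_mul] at hcomb
      have hpt : (1 - lam) • z₀ + lam • (x + t • u) = z₀ + s • u + lam • (x - z₀) := by
        have hts : lam * t = s := div_mul_cancel₀ s ht0.ne'
        rw [smul_add, smul_smul, hts, sub_smul, one_smul, smul_sub]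
        abel
      rw [hpt] at hcomb
      have hb : (1 - lam) * r₀ + lam * M' < c := by
        have h4 : lam * (M' - r₀) ≤ (c - r₀) / 2 := by
          calc lam * (M' - r₀) ≤ lam0 * (M' - r₀) :=
                mul_le_mul_of_nonneg_right htlam (by linarith)
            _ ≤ (c - r₀) / (2 * (M' - r₀)) * (M' - r₀) :=
                mul_le_mul_of_nonneg_right (min_le_left _ _) (by linarith)
            _ = (c - r₀) / 2 := by
                rw [div_mul_eq_mul_div, mul_comm (c - r₀) (M' - r₀), mul_comm 2 (M' - r₀),
                  mul_div_mul_left _ _ (ne_of_gt (by linarith : (0:ℝ) < M' - r₀))]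
        nlinarith [h4]
      exact absurd htnb (not_lt.2 (hcomb.trans (EReal.coe_le_coe_iff.2 hb.le)))
    have hrec : recAt f z₀ u ≤ 0 := (hkey u).2 hclaim
    have : u ∈ ({0} : Set Y) := hset ▸ hrec
    exact hu0 this

private lemma lsc_sub (f : Y → EReal) (hlsc : LowerSemicontinuous f) (xs : WeakDual ℝ Y) :
    LowerSemicontinuous fun x => f x - (xs x : EReal) := by
  intro x₀ y hy
  obtain ⟨d, hd1, hd2⟩ := EReal.exists_between_coe_real hy
  have hd3 : ((d + xs x₀ : ℝ) : EReal) < f x₀ := by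
    rw [EReal.coe_add]
    exact (EReal.lt_sub_iff_add_lt (Or.inl (EReal.coe_ne_bot _))
      (Or.inl (EReal.coe_ne_top _))).1 hd2
  obtain ⟨e, he1, he2⟩ := EReal.exists_between_coe_real hd3
  have he1' : d + xs x₀ < e := by exact_mod_cast he1
  have hf_ev : ∀ᶠ x in 𝓝 x₀, (e : EReal) < f x := hlsc x₀ (e : EReal) he2
  have hxs_ev : ∀ᶠ x in 𝓝 x₀, xs x < e - d := by
    have : Continuous fun x : Y => xs x := ContinuousLinearMap.continuous xs
    exact this.continuousAt.eventually_lt continuousAt_const (by linarith)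
  filter_upwards [hf_ev, hxs_ev] with x h1 h2
  refine lt_trans hd1 ?_
  rw [EReal.lt_sub_iff_add_lt (Or.inl (EReal.coe_ne_bot _)) (Or.inl (EReal.coe_ne_top _))]
  calc ((d : EReal) + (xs x : EReal)) = ((d + xs x : ℝ) : EReal) := (EReal.coe_add _ _).symm
    _ < (e : EReal) := by exact_mod_cast (by linarith : d + xs x < e)
    _ < f x := h1

private lemma conv_sub (f : Y → EReal) (hconv : Convex ℝ {p : Y × ℝ | f p.1 ≤ (p.2 : EReal)})
    (xs : WeakDual ℝ Y) :
    Convex ℝ {p : Y × ℝ | f p.1 - (xs p.1 : EReal) ≤ (p.2 : EReal)} := by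
  have hiff : ∀ (x : Y) (r : ℝ),
      f x - (xs x : EReal) ≤ (r : EReal) ↔ f x ≤ ((r + xs x : ℝ) : EReal) := by
    intro x r
    rw [EReal.sub_le_iff_le_add (Or.inl (EReal.coe_ne_bot _)) (Or.inl (EReal.coe_ne_top _)),
      EReal.coe_add]
  intro p hp q hq a b ha hb hab
  simp only [Set.mem_setOf_eq] at hp hq ⊢
  rw [hiff] at hp hq ⊢
  have := hconv (Set.mem_setOf_eq ▸ hp : (p.1, p.2 + xs p.1) ∈ _)
    (Set.mem_setOf_eq ▸ hq : (q.1, q.2 + xs q.1) ∈ _) ha hb hab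
  simp only [Prod.smul_mk, Prod.mk_add_mk, Set.mem_setOf_eq, smul_eq_mul] at this
  have harith : a * (p.2 + xs p.1) + b * (q.2 + xs q.1)
      = (a • p + b • q).2 + xs ((a • p + b • q).1) := by
    simp only [Prod.smul_fst, Prod.smul_snd, Prod.fst_add, Prod.snd_add, smul_eq_mul,
      map_add, map_smul]
    ring
  rw [harith] at this
  exact this

end Helpers


variable {X : Type*}

theorem stmt2 [AddCommGroup X] [Module ℝ X] [TopologicalSpace X] [IsTopologicalAddGroup X]
    [ContinuousSMul ℝ X] [LocallyConvexSpace ℝ X] [T2Space X]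
    (f : X → EReal) (hf : GammaFn f) (z₀ : X) (hz₀ : f z₀ ≠ ⊤) :
    (DirCoercive f ↔ {u : X | recAt f z₀ u ≤ 0} = {0}) ∧
    ((∃ xs : WeakDual ℝ X, DirCoercive (fun x => f x - (xs x : EReal))) ↔
      ∃ xs : WeakDual ℝ X, {u : X | recAt f z₀ u ≤ (xs u : EReal)} = {0}) := by
  obtain ⟨-, hbot, hconv, hlsc⟩ := hf
  obtain ⟨r₀, hr₀⟩ : ∃ r : ℝ, f z₀ = (r : EReal) :=
    ⟨(f z₀).toReal, (EReal.coe_toReal hz₀ (hbot z₀)).symm⟩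
  refine ⟨partA f hbot hconv hlsc z₀ hz₀, ?_⟩
  have hmain : ∀ xs : WeakDual ℝ X,
      (DirCoercive (fun x => f x - (xs x : EReal)) ↔
        {u : X | recAt f z₀ u ≤ (xs u : EReal)} = {0}) := by
    intro xs
    have hbot_g : ∀ x, (fun x => f x - (xs x : EReal)) x ≠ ⊥ := by
      intro x
      simp only
      rcases EReal.exists_between_coe_real (show (⊥ : EReal) < f x from
        Ne.bot_lt (hbot x)) with ⟨d, _, hd2⟩
      have : ((d - xs x : ℝ) : EReal) ≤ f x - (xs x : EReal) :=
        EReal.coe_sub d (xs x) ▸ EReal.sub_le_sub hd2.le le_rfl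
      intro hcon
      rw [hcon, le_bot_iff] at this
      exact EReal.coe_ne_bot _ this
    have hz₀g : (fun x => f x - (xs x : EReal)) z₀ ≠ ⊤ := by
      simp only
      rw [hr₀, ← EReal.coe_sub]
      exact EReal.coe_ne_top _
    have hsets : {u : X | recAt (fun x => f x - (xs x : EReal)) z₀ u ≤ 0}
        = {u : X | recAt f z₀ u ≤ (xs u : EReal)} := by
      ext u
      simp only [Set.mem_setOf_eq]
      rw [recAt_le_iff', recAt_le_iff']
      refine forall₂_congr fun t ht => ?_
      have h1 : f (z₀ + t • u) - ((xs (z₀ + t • u) : ℝ) : EReal)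
          = f (z₀ + t • u) - ((xs z₀ + t * xs u : ℝ) : EReal) := by
        rw [map_add, map_smul, smul_eq_mul]
      have h2 : f z₀ - ((xs z₀ : ℝ) : EReal) = ((r₀ - xs z₀ : ℝ) : EReal) := by
        rw [hr₀, ← EReal.coe_sub]
      rw [h1, h2, hr₀]
      exact termB ht (hbot _)
    rw [← hsets]
    exact partA _ hbot_g (conv_sub f hconv xs) (lsc_sub f hlsc xs) z₀ hz₀g
  constructor
  · rintro ⟨xs, h⟩; exact ⟨xs, (hmain xs).1 h⟩
  · rintro ⟨xs, h⟩; exact ⟨xs, (hmain xs).2 h⟩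
end
end

section
/- Let X be a real separated locally convex space and let g : X → ℝ ∪ {+∞} be a proper lower semicontinuous sublinear function. Set K := {x ∈ X : g(x) ≤ 0} and L := K ∩ (−K). Then K is a closed convex cone and L is a closed linear subspace of X. Moreover, L = {x ∈ X : g(x) = g(−x) = 0} = [∂g(0)]^⊥, and g(x + u) = g(x) for all x ∈ X and all u ∈ L. -/
open Filter Topology Set Pointwise TopologicalSpace

noncomputable section

set_option linter.unusedSectionVars false
set_option maxHeartbeats 1000000

section Aux

variable {X : Type*} [AddCommGroup X] [Module ℝ X] [TopologicalSpace X] [IsTopologicalAddGroup X]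
    [ContinuousSMul ℝ X] [LocallyConvexSpace ℝ X]

lemma myFinite (g : X → EReal) (hproper : ∀ x, g x ≠ ⊥) {y : X} {s : ℝ}
    (h : g y ≤ (s : EReal)) : ∃ v : ℝ, g y = (v : EReal) ∧ v ≤ s := by
  refine ⟨(g y).toReal, ?_, ?_⟩
  · exact (EReal.coe_toReal (h.trans_lt (EReal.coe_lt_top s)).ne (hproper y)).symm
  · have := EReal.coe_toReal (h.trans_lt (EReal.coe_lt_top s)).ne (hproper y)
    rw [← this] at h
    exact EReal.coe_le_coe_iff.1 h

lemma epiClosed (g : X → EReal) (hlsc : LowerSemicontinuous g) :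
    IsClosed {p : X × ℝ | g p.1 ≤ (p.2 : EReal)} := by
  rw [← isOpen_compl_iff, isOpen_iff_mem_nhds]
  intro p hp
  simp only [mem_compl_iff, mem_setOf_eq, not_le] at hp
  obtain ⟨r, hr1, hr2⟩ := exists_between hp
  have hrt : r ≠ ⊤ := (hr2.trans_le le_top).ne
  have hrb : r ≠ ⊥ := (bot_le.trans_lt hr1).ne'
  lift r to ℝ using ⟨hrt, hrb⟩
  have h1 : ∀ᶠ y in 𝓝 p.1, (r : EReal) < g y := hlsc p.1 r hr2
  have h2 : Iio r ∈ 𝓝 p.2 := Iio_mem_nhds (EReal.coe_lt_coe_iff.1 hr1)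
  have := prod_mem_nhds (h1 : {y | (r:EReal) < g y} ∈ 𝓝 p.1) h2
  rw [Prod.mk.eta] at this
  filter_upwards [this] with q hq
  simp only [mem_prod, mem_setOf_eq, mem_Iio] at hq
  simp only [mem_compl_iff, mem_setOf_eq, not_le]
  exact lt_trans (EReal.coe_lt_coe_iff.2 hq.2) hq.1

lemma epiConvex (g : X → EReal) (hsub : SublinearFn g) (hproper : ∀ x, g x ≠ ⊥) :
    Convex ℝ {p : X × ℝ | g p.1 ≤ (p.2 : EReal)} := by
  intro p hp q hq a b ha hb hab
  simp only [mem_setOf_eq] at hp hq ⊢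
  obtain ⟨v, hv, hvs⟩ := myFinite g hproper hp
  obtain ⟨w, hw, hws⟩ := myFinite g hproper hq
  rcases ha.eq_or_lt with rfl | ha'
  · simp only [zero_add] at hab
    subst hab
    simpa using hq
  rcases hb.eq_or_lt with rfl | hb'
  · simp only [add_zero] at hab
    subst hab
    simpa using hp
  have key : g (a • p.1 + b • q.1) ≤ g (a • p.1) + g (b • q.1) := hsub.2.2 _ _
  rw [hsub.2.1 _ a ha', hsub.2.1 _ b hb', hv, hw] at key
  refine key.trans ?_
  rw [← EReal.coe_mul, ← EReal.coe_mul, ← EReal.coe_add]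
  have : a * v + b * w ≤ a • p.2 + b • q.2 := by
    simp only [smul_eq_mul]
    have := mul_le_mul_of_nonneg_left hvs ha
    have := mul_le_mul_of_nonneg_left hws hb
    linarith
  exact_mod_cast this

/-- Separation of a point below the epigraph. -/
lemma sepA (g : X → EReal) (hsub : SublinearFn g) (hproper : ∀ x, g x ≠ ⊥)
    (hlsc : LowerSemicontinuous g) (x : X) (r : ℝ) (hr : (r : EReal) < g x) :
    ∃ (ψ : X →L[ℝ] ℝ) (c u : ℝ),
      (∀ y : X, ∀ s : ℝ, g y ≤ (s : EReal) → ψ y + c * s < u) ∧ u < ψ x + c * r := by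
  have hx : (x, r) ∉ {p : X × ℝ | g p.1 ≤ (p.2 : EReal)} := by
    simp only [mem_setOf_eq, not_le]; exact hr
  obtain ⟨f, u, hfu, hux⟩ :=
    geometric_hahn_banach_closed_point (epiConvex g hsub hproper) (epiClosed g hlsc) hx
  have hdec : ∀ (y : X) (s : ℝ), f (y, s) = f (y, 0) + f (0, 1) * s := by
    intro y s
    have h1 : (y, s) = (y, (0:ℝ)) + s • ((0 : X), (1 : ℝ)) := by
      simp [Prod.ext_iff]
    rw [h1, map_add, map_smul, smul_eq_mul, mul_comm]
  refine ⟨f.comp (ContinuousLinearMap.inl ℝ X ℝ), f (0, 1), u, ?_, ?_⟩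
  · intro y s hys
    have := hfu (y, s) hys
    rw [hdec y s] at this
    simpa [mul_comm] using this
  · have := hux
    rw [hdec x r] at this
    simpa [mul_comm] using this

lemma cNonpos (g : X → EReal) (hsub : SublinearFn g) {ψ : X →L[ℝ] ℝ} {c u : ℝ}
    (H : ∀ y : X, ∀ s : ℝ, g y ≤ (s : EReal) → ψ y + c * s < u) : c ≤ 0 ∧ 0 < u := by
  have h0 : ∀ s : ℝ, 0 ≤ s → c * s < u := by
    intro s hs
    have := H 0 s (by rw [hsub.1]; exact_mod_cast hs)
    simpa using this
  constructor
  · by_contra hc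
    push_neg at hc
    have := h0 (max 0 (u / c)) (le_max_left _ _)
    have h2 : c * (u / c) ≤ c * max 0 (u / c) :=
      mul_le_mul_of_nonneg_left (le_max_right _ _) hc.le
    rw [mul_div_cancel₀ _ hc.ne'] at h2
    linarith
  · simpa using h0 0 le_rfl

lemma scaleBound (g : X → EReal) (hsub : SublinearFn g) {ψ : X →L[ℝ] ℝ} {c u : ℝ}
    (H : ∀ y : X, ∀ s : ℝ, g y ≤ (s : EReal) → ψ y + c * s < u)
    {y : X} {v : ℝ} (hv : g y = (v : EReal)) : ψ y + c * v ≤ 0 := by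
  by_contra h
  push_neg at h
  set m := ψ y + c * v with hm
  have key : ∀ t : ℝ, 0 < t → t * m < u := by
    intro t ht
    have h1 : g (t • y) ≤ ((t * v : ℝ) : EReal) := by
      rw [hsub.2.1 y t ht, hv, ← EReal.coe_mul]
    have := H (t • y) (t * v) h1
    rw [map_smul, smul_eq_mul] at this
    calc t * m = t * ψ y + c * (t * v) := by ring
    _ < u := this
  have := key ((|u| + 1) / m) (by positivity)
  rw [div_mul_cancel₀ _ h.ne'] at this
  have := le_abs_self u
  linarith

lemma normSub (g : X → EReal) (hsub : SublinearFn g) (hproper : ∀ x, g x ≠ ⊥)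
    {ψ : X →L[ℝ] ℝ} {c u : ℝ}
    (H : ∀ y : X, ∀ s : ℝ, g y ≤ (s : EReal) → ψ y + c * s < u) (hc : c < 0) :
    ∀ y : X, ((((-c)⁻¹ * ψ y : ℝ)) : EReal) ≤ g y := by
  intro y
  rcases eq_or_ne (g y) ⊤ with h | h
  · rw [h]; exact le_top
  have hv : g y = ((g y).toReal : EReal) := (EReal.coe_toReal h (hproper y)).symm
  have hb := scaleBound g hsub H hv
  rw [hv]
  rw [EReal.coe_le_coe_iff]
  rw [inv_mul_le_iff₀ (by linarith : (0:ℝ) < -c)]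
  nlinarith

/-- Nonemptiness of the subdifferential at 0. -/
lemma subgradExists (g : X → EReal) (hsub : SublinearFn g) (hproper : ∀ x, g x ≠ ⊥)
    (hlsc : LowerSemicontinuous g) :
    ∃ ψ : X →L[ℝ] ℝ, ∀ y : X, ((ψ y : ℝ) : EReal) ≤ g y := by
  have hr : ((-1 : ℝ) : EReal) < g 0 := by
    rw [hsub.1]; exact_mod_cast (by norm_num : (-1:ℝ) < 0)
  obtain ⟨ψ, c, u, H, hux⟩ := sepA g hsub hproper hlsc 0 (-1) hr
  obtain ⟨hc0, hu0⟩ := cNonpos g hsub H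
  simp only [map_zero, zero_add] at hux
  have hc : c < 0 := by linarith [hux]
  refine ⟨(-c)⁻¹ • ψ, fun y => ?_⟩
  have := normSub g hsub hproper H hc y
  simpa using this

/-- If `0 < g x`, there is a subgradient positive at `x`. -/
lemma subgradPos (g : X → EReal) (hsub : SublinearFn g) (hproper : ∀ x, g x ≠ ⊥)
    (hlsc : LowerSemicontinuous g) {x : X} (hx : (0 : EReal) < g x) :
    ∃ ψ : X →L[ℝ] ℝ, (∀ y : X, ((ψ y : ℝ) : EReal) ≤ g y) ∧ 0 < ψ x := by
  have hr : ((0 : ℝ) : EReal) < g x := by exact_mod_cast hx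
  obtain ⟨ψ, c, u, H, hux⟩ := sepA g hsub hproper hlsc x 0 hr
  obtain ⟨hc0, hu0⟩ := cNonpos g hsub H
  rw [mul_zero, add_zero] at hux
  rcases hc0.lt_or_eq with hc | hc
  · refine ⟨(-c)⁻¹ • ψ, fun y => by simpa using normSub g hsub hproper H hc y, ?_⟩
    simp only [ContinuousLinearMap.smul_apply, smul_eq_mul]
    have : (0:ℝ) < (-c)⁻¹ := inv_pos.2 (by linarith)
    nlinarith
  · subst hc
    -- ψ ≤ 0 on dom g
    have hneg : ∀ y : X, g y ≠ ⊤ → ψ y ≤ 0 := by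
      intro y hy
      have hv : g y = ((g y).toReal : EReal) := (EReal.coe_toReal hy (hproper y)).symm
      have := scaleBound g hsub H hv
      linarith
    obtain ⟨ψ₀, hψ₀⟩ := subgradExists g hsub hproper hlsc
    have hψx : 0 < ψ x := lt_trans hu0 hux
    set t := (|ψ₀ x| + 1) / ψ x with ht
    have htp : 0 < t := by positivity
    refine ⟨ψ₀ + t • ψ, fun y => ?_, ?_⟩
    · rcases eq_or_ne (g y) ⊤ with h | h
      · rw [h]; exact le_top
      refine le_trans ?_ (hψ₀ y)
      simp only [ContinuousLinearMap.add_apply, ContinuousLinearMap.smul_apply, smul_eq_mul]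
      rw [EReal.coe_le_coe_iff]
      have := hneg y h
      nlinarith
    · simp only [ContinuousLinearMap.add_apply, ContinuousLinearMap.smul_apply, smul_eq_mul, ht]
      rw [div_mul_cancel₀ _ hψx.ne']
      have := le_abs_self (-ψ₀ x)
      rw [abs_neg] at this
      linarith

end Aux

variable {X : Type*}

theorem stmt3 [AddCommGroup X] [Module ℝ X] [TopologicalSpace X] [IsTopologicalAddGroup X]
    [ContinuousSMul ℝ X] [LocallyConvexSpace ℝ X] [T2Space X]
    (g : X → EReal) (hsub : SublinearFn g) (hproper : ∀ x, g x ≠ ⊥)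
    (hlsc : LowerSemicontinuous g) :
    IsClosed {x : X | g x ≤ 0} ∧ Convex ℝ {x : X | g x ≤ 0} ∧
    (∀ x ∈ {x : X | g x ≤ 0}, ∀ t : ℝ, 0 ≤ t → t • x ∈ {x : X | g x ≤ 0}) ∧
    IsClosed ({x : X | g x ≤ 0} ∩ (-{x : X | g x ≤ 0})) ∧
    (∃ S : Submodule ℝ X, {x : X | g x ≤ 0} ∩ (-{x : X | g x ≤ 0}) = (S : Set X)) ∧
    {x : X | g x ≤ 0} ∩ (-{x : X | g x ≤ 0}) = {x : X | g x = 0 ∧ g (-x) = 0} ∧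
    {x : X | g x ≤ 0} ∩ (-{x : X | g x ≤ 0}) = {x : X | ∀ xs ∈ subdiff0 g, xs x = 0} ∧
    ∀ x u : X, u ∈ {x : X | g x ≤ 0} ∩ (-{x : X | g x ≤ 0}) → g (x + u) = g x := by
  set K := {x : X | g x ≤ 0} with hK
  have hcoe0 : ((0 : ℝ) : EReal) = (0 : EReal) := rfl
  -- K is closed
  have h1 : IsClosed K := by
    rw [← isOpen_compl_iff, isOpen_iff_mem_nhds]
    intro x hx
    simp only [hK, mem_compl_iff, mem_setOf_eq, not_le] at hx
    filter_upwards [hlsc x 0 hx] with y hy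
    simp only [hK, mem_compl_iff, mem_setOf_eq, not_le]
    exact hy
  -- K is convex
  have h2 : Convex ℝ K := by
    intro x hx y hy a b ha hb hab
    simp only [hK, mem_setOf_eq] at hx hy ⊢
    obtain ⟨v, hv, hvs⟩ := myFinite g hproper (hx.trans_eq hcoe0.symm)
    obtain ⟨w, hw, hws⟩ := myFinite g hproper (hy.trans_eq hcoe0.symm)
    rcases ha.eq_or_lt with rfl | ha'
    · simp only [zero_add] at hab; subst hab; simpa using hy
    rcases hb.eq_or_lt with rfl | hb'
    · simp only [add_zero] at hab; subst hab; simpa using hx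
    have key : g (a • x + b • y) ≤ g (a • x) + g (b • y) := hsub.2.2 _ _
    rw [hsub.2.1 _ a ha', hsub.2.1 _ b hb', hv, hw, ← EReal.coe_mul, ← EReal.coe_mul,
      ← EReal.coe_add] at key
    refine key.trans ?_
    rw [← hcoe0, EReal.coe_le_coe_iff]
    nlinarith
  -- K is a cone
  have h3 : ∀ x ∈ K, ∀ t : ℝ, 0 ≤ t → t • x ∈ K := by
    intro x hx t ht
    simp only [hK, mem_setOf_eq] at hx ⊢
    rcases ht.eq_or_lt with rfl | ht'
    · rw [zero_smul, hsub.1]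
    obtain ⟨v, hv, hvs⟩ := myFinite g hproper (hx.trans_eq hcoe0.symm)
    rw [hsub.2.1 x t ht', hv, ← EReal.coe_mul, ← hcoe0, EReal.coe_le_coe_iff]
    nlinarith
  -- elements of L have g x = 0 = g (-x)
  have hzero : ∀ x ∈ K ∩ -K, g x = 0 ∧ g (-x) = 0 := by
    intro x hx
    obtain ⟨hx1, hx2⟩ := hx
    rw [Set.mem_neg] at hx2
    simp only [hK, mem_setOf_eq] at hx1 hx2
    obtain ⟨v, hv, hvs⟩ := myFinite g hproper (hx1.trans_eq hcoe0.symm)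
    obtain ⟨w, hw, hws⟩ := myFinite g hproper (hx2.trans_eq hcoe0.symm)
    have key : (0 : EReal) ≤ g x + g (-x) := by
      have := hsub.2.2 x (-x)
      rw [add_neg_cancel, hsub.1] at this
      exact this
    rw [hv, hw, ← EReal.coe_add, ← hcoe0, EReal.coe_le_coe_iff] at key
    have hv0 : v = 0 := by linarith
    have hw0 : w = 0 := by linarith
    rw [hv, hw, hv0, hw0]
    exact ⟨rfl, rfl⟩
  have h4 : IsClosed (K ∩ -K) := h1.inter h1.neg
  -- L is a submodule
  have h5 : ∃ S : Submodule ℝ X, K ∩ -K = (S : Set X) := by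
    refine ⟨{ carrier := K ∩ -K, add_mem' := ?_, zero_mem' := ?_, smul_mem' := ?_ }, rfl⟩
    · rintro a b ⟨ha1, ha2⟩ ⟨hb1, hb2⟩
      rw [Set.mem_neg] at ha2 hb2
      constructor
      · simp only [hK, mem_setOf_eq] at ha1 hb1 ⊢
        refine (hsub.2.2 a b).trans ?_
        calc g a + g b ≤ g a + 0 := add_le_add_right hb1 _
          _ = g a := add_zero _
          _ ≤ 0 := ha1
      · rw [Set.mem_neg]
        simp only [hK, mem_setOf_eq] at ha2 hb2 ⊢
        have : -(a + b) = -a + -b := by abel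
        rw [this]
        refine (hsub.2.2 (-a) (-b)).trans ?_
        calc g (-a) + g (-b) ≤ g (-a) + 0 := add_le_add_right hb2 _
          _ = g (-a) := add_zero _
          _ ≤ 0 := ha2
    · constructor
      · simp only [hK, mem_setOf_eq, hsub.1, le_refl]
      · rw [Set.mem_neg, neg_zero]
        simp only [hK, mem_setOf_eq, hsub.1, le_refl]
    · rintro c x ⟨hx1, hx2⟩
      rw [Set.mem_neg] at hx2
      rcases le_or_gt 0 c with hc | hc
      · refine ⟨h3 x hx1 c hc, ?_⟩
        rw [Set.mem_neg, ← smul_neg]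
        exact h3 (-x) hx2 c hc
      · have h1' : c • x = (-c) • (-x) := by rw [neg_smul, smul_neg, neg_neg]
        have h2' : -(c • x) = (-c) • x := by rw [neg_smul]
        constructor
        · rw [show (c • x : X) = (-c) • (-x) from h1']
          exact h3 (-x) hx2 (-c) (by linarith)
        · rw [Set.mem_neg, h2']
          exact h3 x hx1 (-c) (by linarith)
  -- L = {x | g x = 0 ∧ g (-x) = 0}
  have h6 : K ∩ -K = {x : X | g x = 0 ∧ g (-x) = 0} := by
    ext x
    constructor
    · intro hx; exact hzero x hx
    · rintro ⟨ha, hb⟩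
      exact ⟨by simp only [hK, mem_setOf_eq, ha, le_refl],
        by rw [Set.mem_neg]; simp only [hK, mem_setOf_eq, hb, le_refl]⟩
  -- L = (∂g(0))^⊥
  have h7 : K ∩ -K = {x : X | ∀ xs ∈ subdiff0 g, xs x = 0} := by
    ext x
    constructor
    · intro hx
      obtain ⟨ha, hb⟩ := hzero x hx
      intro xs hxs
      have a1 : (xs x : EReal) ≤ 0 := (hxs x).trans_eq ha
      have a2 : (xs (-x) : EReal) ≤ 0 := (hxs (-x)).trans_eq hb
      rw [← hcoe0, EReal.coe_le_coe_iff] at a1 a2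
      rw [map_neg] at a2
      linarith
    · intro hx
      have key : ∀ y : X, (∀ xs ∈ subdiff0 g, xs y = 0) → g y ≤ 0 := by
        intro y hy
        by_contra h
        push_neg at h
        obtain ⟨ψ, hψ1, hψ2⟩ := subgradPos g hsub hproper hlsc h
        have hmem : (show WeakDual ℝ X from ψ) ∈ subdiff0 g := fun z => hψ1 z
        have := hy (show WeakDual ℝ X from ψ) hmem
        have hz : ψ y = 0 := this
        linarith
      have hx' : ∀ xs ∈ subdiff0 g, xs (-x) = 0 := by
        intro xs hxs
        rw [map_neg, hx xs hxs, neg_zero]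
      exact ⟨key x hx, by rw [Set.mem_neg]; exact key (-x) hx'⟩
  -- invariance
  have h8 : ∀ x u : X, u ∈ K ∩ -K → g (x + u) = g x := by
    intro x u hu
    obtain ⟨hu0, hun0⟩ := hzero u hu
    refine le_antisymm ?_ ?_
    · refine (hsub.2.2 x u).trans_eq ?_
      rw [hu0, add_zero]
    · have hx : x = x + u + -u := by abel
      calc g x = g (x + u + -u) := by rw [← hx]
        _ ≤ g (x + u) + g (-u) := hsub.2.2 _ _
        _ = g (x + u) := by rw [hun0, add_zero]
  exact ⟨h1, h2, h3, h4, h5, h6, h7, h8⟩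
end
end

section
/- Let X be a real separated locally convex space and let g : X → ℝ ∪ {+∞} be a proper lower semicontinuous sublinear function. If u* ∈ ∂g(0), then L_{u*} = [∂g(0) − ∂g(0)]^⊥. Consequently, L_{x*} ⊆ L_{u*} for every x* ∈ X* and every u* ∈ ∂g(0); in particular L_{u*} = L_{v*} for all u*, v* ∈ ∂g(0). -/
open Filter Topology Set Pointwise TopologicalSpace

noncomputable section

variable {X : Type*}

lemma key [AddCommGroup X] [Module ℝ X] [TopologicalSpace X] [IsTopologicalAddGroup X]
    [ContinuousSMul ℝ X] [LocallyConvexSpace ℝ X] (g : X → EReal) (hsub : SublinearFn g) (hproper : ∀ x, g x ≠ ⊥)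
    (hlsc : LowerSemicontinuous g) (us : WeakDual ℝ X)
    (hus : ∀ y, ((us y : ℝ) : EReal) ≤ g y)
    (x : X) (hx : ((us x : ℝ) : EReal) < g x) :
    ∃ ys : WeakDual ℝ X, (∀ y, ((ys y : ℝ) : EReal) ≤ g y) ∧ us x < ys x := by
  obtain ⟨h0, hhom, hadd⟩ := hsub
  set S : Set (X × ℝ) := {p : X × ℝ | g p.1 ≤ (p.2 : EReal)} with hS
  -- reals attained: if g y ≤ coe then g y = coe of its toReal
  have hreal : ∀ y : X, ∀ c : ℝ, g y ≤ (c : EReal) → ∃ d : ℝ, g y = (d : EReal) ∧ d ≤ c := by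
    intro y c hc
    have hne : g y ≠ ⊤ := fun h => by simp [h] at hc
    have h1 : g y = ((g y).toReal : EReal) := (EReal.coe_toReal hne (hproper y)).symm
    refine ⟨(g y).toReal, h1, ?_⟩
    rw [h1] at hc; exact_mod_cast hc
  have hclosed : IsClosed S := by
    rw [← isOpen_compl_iff, isOpen_iff_mem_nhds]
    rintro ⟨y, t⟩ hp
    simp only [mem_compl_iff, hS, mem_setOf_eq, not_le] at hp
    obtain ⟨c, hc1, hc2⟩ := EReal.exists_between_coe_real hp
    have h1 : ∀ᶠ z in 𝓝 y, (c : EReal) < g z := hlsc y _ hc2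
    have h2 : ∀ᶠ s in 𝓝 t, s < c := Iio_mem_nhds (by exact_mod_cast hc1)
    have := h1.prod_nhds h2
    refine Filter.mem_of_superset this ?_
    rintro ⟨z, s⟩ ⟨hz, hs⟩
    simp only [mem_compl_iff, hS, mem_setOf_eq, not_le]
    calc ((s : ℝ) : EReal) < (c : EReal) := by exact_mod_cast hs
      _ < g z := hz
  have hconv : Convex ℝ S := by
    rintro ⟨y, s⟩ hy ⟨z, t⟩ hz a b ha hb hab
    simp only [hS, mem_setOf_eq] at hy hz
    show g (a • (y, s) + b • (z, t)).1 ≤ (((a • (y, s) + b • (z, t)).2 : ℝ) : EReal)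
    simp only [Prod.fst_add, Prod.snd_add, Prod.smul_fst, Prod.smul_snd, smul_eq_mul]
    rcases eq_or_lt_of_le ha with rfl | ha'
    · have hb1 : b = 1 := by linarith
      subst hb1; simpa using hz
    rcases eq_or_lt_of_le hb with rfl | hb'
    · have ha1 : a = 1 := by linarith
      subst ha1; simpa using hy
    obtain ⟨cy, hgy, hcy⟩ := hreal y s hy
    obtain ⟨cz, hgz, hcz⟩ := hreal z t hz
    calc g (a • y + b • z) ≤ g (a • y) + g (b • z) := hadd _ _
      _ = ((a * cy + b * cz : ℝ) : EReal) := by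
          rw [hhom y a ha', hhom z b hb', hgy, hgz]
          rw [← EReal.coe_mul, ← EReal.coe_mul, ← EReal.coe_add]
      _ ≤ ((a * s + b * t : ℝ) : EReal) := by
          apply EReal.coe_le_coe_iff.2
          have := mul_le_mul_of_nonneg_left hcy ha
          have := mul_le_mul_of_nonneg_left hcz hb
          linarith
  have hnot : ((x, us x) : X × ℝ) ∉ S := by
    simp only [hS, mem_setOf_eq, not_le]; exact hx
  obtain ⟨f, u, hfS, hfx⟩ := geometric_hahn_banach_closed_point hconv hclosed hnot
  have hmem0 : ((0, 0) : X × ℝ) ∈ S := by simp [hS, h0]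
  have hu : 0 < u := by
    have h := hfS _ hmem0
    rw [show ((0, 0) : X × ℝ) = 0 from rfl, map_zero] at h
    exact h
  have hcone : ∀ p ∈ S, ∀ r : ℝ, 0 < r → r • p ∈ S := by
    rintro ⟨y, t⟩ hp r hr
    simp only [hS, mem_setOf_eq] at hp ⊢
    obtain ⟨c, hgy, hcy⟩ := hreal y t hp
    show g (r • y) ≤ ((r * t : ℝ) : EReal)
    rw [hhom y r hr, hgy, ← EReal.coe_mul]
    exact_mod_cast mul_le_mul_of_nonneg_left hcy hr.le
  have hle : ∀ p ∈ S, f p ≤ 0 := by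
    intro p hp
    by_contra hpos
    push_neg at hpos
    have h1 := hfS _ (hcone p hp (u / f p) (div_pos hu hpos))
    rw [map_smul, smul_eq_mul, div_mul_cancel₀ _ hpos.ne'] at h1
    exact lt_irrefl u h1
  set φ : X →L[ℝ] ℝ := f.comp (ContinuousLinearMap.inl ℝ X ℝ) with hφ
  set r : ℝ := f (0, 1) with hrdef
  have hdec : ∀ (y : X) (t : ℝ), f (y, t) = φ y + t * r := by
    intro y t
    have h1 : ((y, t) : X × ℝ) = (y, (0 : ℝ)) + t • ((0 : X), (1 : ℝ)) := by
      simp [Prod.ext_iff]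
    rw [h1, map_add, map_smul, smul_eq_mul]
    rfl
  have hr : r ≤ 0 := by
    have := hle ((0 : X), (1 : ℝ)) (by simp [hS, h0])
    simpa using this
  have hkey : ∀ (y : X) (c : ℝ), g y ≤ (c : EReal) → φ y + c * r ≤ 0 := by
    intro y c hc
    have := hle (y, c) hc
    rwa [hdec] at this
  have hx' : u < φ x + us x * r := by
    have := hfx
    rwa [hdec] at this
  rcases lt_or_eq_of_le hr with hr' | hr'
  · -- r < 0
    have hnr : 0 < -r := by linarith
    refine ⟨show WeakDual ℝ X from (-r)⁻¹ • φ, ?_, ?_⟩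
    · intro y
      by_cases hy : g y = ⊤
      · rw [hy]; exact le_top
      · have hgy : g y = ((g y).toReal : EReal) := (EReal.coe_toReal hy (hproper y)).symm
        have h2 := hkey y (g y).toReal (le_of_eq hgy)
        show (((-r)⁻¹ * φ y : ℝ) : EReal) ≤ g y
        rw [hgy]
        apply EReal.coe_le_coe_iff.2
        rw [inv_mul_le_iff₀ hnr]
        nlinarith
    · show us x < (-r)⁻¹ * φ x
      rw [lt_inv_mul_iff₀ hnr]
      nlinarith
  · -- r = 0
    have hφx : 0 < φ x := by
      rw [hr'] at hx'; simp only [mul_zero, add_zero] at hx'; linarith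
    refine ⟨us + (show WeakDual ℝ X from φ), ?_, ?_⟩
    · intro y
      by_cases hy : g y = ⊤
      · rw [hy]; exact le_top
      · have hgy : g y = ((g y).toReal : EReal) := (EReal.coe_toReal hy (hproper y)).symm
        have h2 := hkey y (g y).toReal (le_of_eq hgy)
        rw [hr'] at h2
        have h3 : us y ≤ (g y).toReal := by
          have := hus y; rw [hgy] at this; exact_mod_cast this
        show ((us y + φ y : ℝ) : EReal) ≤ g y
        rw [hgy]
        apply EReal.coe_le_coe_iff.2
        nlinarith
    · show us x < us x + φ x
      linarith

theorem stmt5 [AddCommGroup X] [Module ℝ X] [TopologicalSpace X] [IsTopologicalAddGroup X]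
    [ContinuousSMul ℝ X] [LocallyConvexSpace ℝ X] [T2Space X]
    (g : X → EReal) (hsub : SublinearFn g) (hproper : ∀ x, g x ≠ ⊥)
    (hlsc : LowerSemicontinuous g) :
    (∀ us ∈ subdiff0 g,
      LxSet g us = {x : X | ∀ ys ∈ subdiff0 g, ∀ zs ∈ subdiff0 g, (ys - zs) x = 0}) ∧
    (∀ xs : WeakDual ℝ X, ∀ us ∈ subdiff0 g, LxSet g xs ⊆ LxSet g us) ∧
    (∀ us ∈ subdiff0 g, ∀ vs ∈ subdiff0 g, LxSet g us = LxSet g vs) := by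
  have hLsub : ∀ (xs : WeakDual ℝ X), ∀ us ∈ subdiff0 g, LxSet g xs ⊆ LxSet g us := by
    intro xs us hus x hx
    obtain ⟨h1, h2⟩ := hx
    have ha : ((us x : ℝ) : EReal) ≤ ((xs x : ℝ) : EReal) := h1 ▸ hus x
    have hb : ((us (-x) : ℝ) : EReal) ≤ ((-(xs x) : ℝ) : EReal) := h2 ▸ hus (-x)
    have ha' : us x ≤ xs x := by exact_mod_cast ha
    have hb' : us (-x) ≤ -(xs x) := by exact_mod_cast hb
    rw [map_neg] at hb'
    have heq : us x = xs x := le_antisymm ha' (by linarith)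
    exact ⟨by rw [h1, heq], by rw [h2, heq]⟩
  refine ⟨?_, hLsub, fun us hus vs hvs =>
    Set.Subset.antisymm (hLsub us vs hvs) (hLsub vs us hus)⟩
  intro us hus
  ext x
  simp only [Set.mem_setOf_eq]
  constructor
  · intro hx ys hys zs hzs
    have hval : ∀ ws ∈ subdiff0 g, ws x = us x := by
      intro ws hws
      have hx' := hLsub us ws hws hx
      have h := hx.1.symm.trans hx'.1
      exact_mod_cast h.symm
    show ys x - zs x = 0
    rw [hval ys hys, hval zs hzs, sub_self]
  · intro hx
    have key1 : g x = ((us x : ℝ) : EReal) := by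
      rcases lt_or_eq_of_le (hus x) with h | h
      · obtain ⟨ys, hys, hgt⟩ := key g hsub hproper hlsc us (fun y => hus y) x h
        have he : ys x - us x = 0 := hx ys hys us hus
        rw [sub_eq_zero] at he
        exact absurd he (by linarith)
      · exact h.symm
    refine ⟨key1, ?_⟩
    rcases lt_or_eq_of_le (hus (-x)) with h | h
    · obtain ⟨ys, hys, hgt⟩ := key g hsub hproper hlsc us (fun y => hus y) (-x) h
      have he : ys x - us x = 0 := hx ys hys us hus
      rw [sub_eq_zero] at he
      rw [map_neg, map_neg] at hgt
      exact absurd he (by intro hh; rw [hh] at hgt; linarith)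
    · rw [← h, map_neg]
end
end

section
/- Let X be a real separated locally convex space, let g : X → ℝ ∪ {+∞} be a proper lower semicontinuous sublinear function, and let x* ∈ X*. The following assertions are equivalent: (a) x* ∈ qri ∂g(0) (quasi-relative interior taken in X* with the weak* topology); (b) the set [g ≤ x*] := {x ∈ X : g(x) ≤ ⟨x, x*⟩} is a linear subspace of X; (b') L_{x*} = [g ≤ x*]; (c) x* ∈ ∂g(0) and [g = x*] := {x ∈ X : g(x) = ⟨x, x*⟩} is a linear subspace of X; (c') x* ∈ ∂g(0) and L_{x*} = [g = x*]. -/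
open Filter Topology Set Pointwise TopologicalSpace

noncomputable section

section ZAux

variable {X : Type*} [AddCommGroup X] [Module ℝ X] [TopologicalSpace X]

lemma zst_real_of_le {a : EReal} {r : ℝ} (hbot : a ≠ ⊥) (h : a ≤ (r : EReal)) :
    ∃ s : ℝ, a = (s : EReal) ∧ s ≤ r := by
  have htop : a ≠ ⊤ := ne_top_of_le_ne_top (EReal.coe_ne_top r) h
  refine ⟨a.toReal, (EReal.coe_toReal htop hbot).symm, ?_⟩
  rw [← EReal.coe_toReal htop hbot] at h
  exact_mod_cast h

lemma zst_pair_eq {a b : EReal} {A B : ℝ} (ha : a ≠ ⊥) (hb : b ≠ ⊥)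
    (haA : a ≤ (A : EReal)) (hbB : b ≤ (B : EReal)) (hAB : A + B = 0)
    (hsum : (0 : EReal) ≤ a + b) : a = (A : EReal) ∧ b = (B : EReal) := by
  obtain ⟨s, rfl, hs⟩ := zst_real_of_le ha haA
  obtain ⟨t, rfl, ht⟩ := zst_real_of_le hb hbB
  rw [← EReal.coe_add] at hsum
  have h0 : (0 : ℝ) ≤ s + t := by exact_mod_cast hsum
  have e1 : s = A := by linarith
  have e2 : t = B := by linarith
  exact ⟨by rw [e1], by rw [e2]⟩

/-- evaluation at `x` as a linear functional on the weak dual -/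
def zst_evalLin (x : X) : WeakDual ℝ X →ₗ[ℝ] ℝ where
  toFun p := p x
  map_add' _ _ := rfl
  map_smul' _ _ := rfl

lemma zst_dualEval (f : WeakDual ℝ X →L[ℝ] ℝ) :
    ∃ x : X, ∀ p : WeakDual ℝ X, f p = p x := by
  classical
  have hinj : Function.Injective (topDualPairing ℝ X) := by
    intro p q h
    ext y
    have := LinearMap.congr_fun h y
    simpa [topDualPairing_apply] using this
  have hemb : IsEmbedding fun (p : WeakDual ℝ X) (y : X) => (topDualPairing ℝ X) p y :=
    WeakBilin.isEmbedding hinj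
  set ι : WeakDual ℝ X → (X → ℝ) := fun p y => (topDualPairing ℝ X) p y with hι
  have hU : f ⁻¹' (Set.Ioo (-1 : ℝ) 1) ∈ 𝓝 (0 : WeakDual ℝ X) := by
    apply f.continuous.continuousAt.preimage_mem_nhds
    rw [map_zero]
    exact Ioo_mem_nhds (by norm_num) (by norm_num)
  rw [hemb.toIsInducing.nhds_eq_comap, Filter.mem_comap] at hU
  obtain ⟨V, hV, hVU⟩ := hU
  rw [nhds_pi, Filter.mem_pi] at hV
  obtain ⟨I, hIfin, t, ht, hIt⟩ := hV
  have hker : ∀ p : WeakDual ℝ X, (∀ x ∈ I, p x = 0) → f p = 0 := by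
    intro p hp
    by_contra h
    have hmem : ∀ c : ℝ, (c • p) ∈ f ⁻¹' (Set.Ioo (-1 : ℝ) 1) := by
      intro c
      apply hVU
      apply hIt
      intro x hx
      have h0 : ι (0 : WeakDual ℝ X) x = 0 := by
          show (topDualPairing ℝ X) 0 x = 0; rw [map_zero]; rfl
      have hmem0 : (0 : ℝ) ∈ t x := by
        have := mem_of_mem_nhds (ht x)
        rwa [h0] at this
      have hcp : ι (c • p) x = c * p x := rfl
      rw [hcp, hp x hx, mul_zero]
      exact hmem0
    have h2 := hmem (2 / f p)
    simp only [Set.mem_preimage, map_smul, smul_eq_mul, Set.mem_Ioo] at h2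
    rw [div_mul_cancel₀ 2 h] at h2
    norm_num at h2
  haveI : Finite ↥I := hIfin.to_subtype
  haveI : Fintype ↥I := Fintype.ofFinite _
  have hle : ⨅ i : I, LinearMap.ker (zst_evalLin (i : X) : WeakDual ℝ X →ₗ[ℝ] ℝ) ≤
      LinearMap.ker (f : WeakDual ℝ X →ₗ[ℝ] ℝ) := by
    intro p hp
    rw [Submodule.mem_iInf] at hp
    exact hker p fun x hx => hp ⟨x, hx⟩
  have hspan := mem_span_of_iInf_ker_le_ker hle
  rw [Submodule.mem_span_range_iff_exists_fun] at hspan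
  obtain ⟨c, hc⟩ := hspan
  refine ⟨∑ i : I, c i • (i : X), fun p => ?_⟩
  have := LinearMap.congr_fun hc p
  simp only [LinearMap.coe_sum, Finset.sum_apply, LinearMap.smul_apply,
    ContinuousLinearMap.coe_coe] at this
  rw [← this, map_sum]
  simp [zst_evalLin, smul_eq_mul]
  rfl

variable {g : X → EReal} (xs : WeakDual ℝ X)

lemma zst_L_eq_level (hsub : SublinearFn g) (hproper : ∀ x, g x ≠ ⊥)
    (hS : ∃ S : Submodule ℝ X, {x : X | g x ≤ (xs x : EReal)} = (S : Set X)) :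
    LxSet g xs = {x : X | g x ≤ (xs x : EReal)} := by
  obtain ⟨S, hS⟩ := hS
  apply Set.Subset.antisymm
  · exact fun x hx => le_of_eq hx.1
  intro x hx
  have hxS : x ∈ (S : Set X) := by rw [← hS]; exact hx
  have hnegx : -x ∈ {x : X | g x ≤ (xs x : EReal)} := by
    rw [hS]; exact S.neg_mem hxS
  have h2 : g (-x) ≤ ((-(xs x) : ℝ) : EReal) := by
    have h := hnegx
    rw [Set.mem_setOf_eq, map_neg] at h
    exact h
  have hsum : (0 : EReal) ≤ g x + g (-x) := by
    have := hsub.2.2 x (-x)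
    rwa [add_neg_cancel, hsub.1] at this
  exact zst_pair_eq (hproper x) (hproper (-x)) hx h2 (by ring) hsum

lemma zst_L_submodule (hsub : SublinearFn g) (hproper : ∀ x, g x ≠ ⊥) :
    ∃ S : Submodule ℝ X, LxSet g xs = (S : Set X) := by
  obtain ⟨h0, hpos, hadd⟩ := hsub
  have hzero : (0 : X) ∈ LxSet g xs := by
    constructor
    · rw [map_zero, h0]; rfl
    · rw [neg_zero, map_zero, h0]; norm_num
  have hneg : ∀ x ∈ LxSet g xs, -x ∈ LxSet g xs := by
    rintro x ⟨h1, h2⟩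
    constructor
    · rw [map_neg]; exact h2
    · rw [neg_neg, map_neg, neg_neg]; exact h1
  have hmempos : ∀ (c : ℝ), 0 < c → ∀ x ∈ LxSet g xs, c • x ∈ LxSet g xs := by
    rintro c hc x ⟨h1, h2⟩
    constructor
    · rw [hpos x c hc, h1, map_smul, smul_eq_mul, ← EReal.coe_mul]
    · have he : -(c • x) = c • (-x) := (smul_neg c x).symm
      rw [he, hpos (-x) c hc, h2, map_smul, smul_eq_mul, ← EReal.coe_mul]
      congr 1
      ring
  refine ⟨{ carrier := LxSet g xs,
            add_mem' := ?_, zero_mem' := hzero, smul_mem' := ?_ }, rfl⟩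
  · rintro x y ⟨hx1, hx2⟩ ⟨hy1, hy2⟩
    have hle1 : g (x + y) ≤ ((xs x + xs y : ℝ) : EReal) := by
      calc g (x + y) ≤ g x + g y := hadd x y
        _ = _ := by rw [hx1, hy1, EReal.coe_add]
    have hle2 : g (-(x + y)) ≤ ((-(xs x) + -(xs y) : ℝ) : EReal) := by
      have he : -(x + y) = -x + -y := by abel
      rw [he]
      calc g (-x + -y) ≤ g (-x) + g (-y) := hadd _ _
        _ = _ := by rw [hx2, hy2, EReal.coe_add]
    have hsum : (0 : EReal) ≤ g (x + y) + g (-(x + y)) := by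
      have := hadd (x + y) (-(x + y))
      rwa [add_neg_cancel, h0] at this
    obtain ⟨e1, e2⟩ := zst_pair_eq (hproper _) (hproper _) hle1 hle2 (by ring) hsum
    constructor
    · rw [map_add]; exact e1
    · rw [map_add, e2]; congr 1; ring
  · intro c x hx
    rcases lt_trichotomy c 0 with hneg' | h0' | hpos'
    · have he : c • x = (-c) • (-x) := (neg_smul_neg c x).symm
      rw [he]
      exact hmempos (-c) (by linarith) _ (hneg x hx)
    · rw [h0', zero_smul]; exact hzero
    · exact hmempos c hpos' x hx

lemma zst_level_submodule (hsub : SublinearFn g) (hproper : ∀ x, g x ≠ ⊥)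
    (hneg : ∀ x : X, g x ≤ (xs x : EReal) → g (-x) ≤ ((xs (-x) : ℝ) : EReal)) :
    ∃ S : Submodule ℝ X, {x : X | g x ≤ (xs x : EReal)} = (S : Set X) := by
  obtain ⟨h0, hpos, hadd⟩ := hsub
  have hzero : (0 : X) ∈ {x : X | g x ≤ (xs x : EReal)} := by
    rw [Set.mem_setOf_eq, map_zero, h0]
    exact_mod_cast le_refl (0 : ℝ)
  have hmempos : ∀ (c : ℝ), 0 < c → ∀ x ∈ {x : X | g x ≤ (xs x : EReal)},
      c • x ∈ {x : X | g x ≤ (xs x : EReal)} := by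
    intro c hc x hx
    obtain ⟨u, hu, hu'⟩ := zst_real_of_le (hproper x) hx
    rw [Set.mem_setOf_eq, hpos x c hc, hu, map_smul, smul_eq_mul, ← EReal.coe_mul]
    apply EReal.coe_le_coe_iff.2
    nlinarith
  refine ⟨{ carrier := {x : X | g x ≤ (xs x : EReal)},
            add_mem' := ?_, zero_mem' := hzero, smul_mem' := ?_ }, rfl⟩
  · intro x y hx hy
    obtain ⟨u, hu, hu'⟩ := zst_real_of_le (hproper x) hx
    obtain ⟨v, hv, hv'⟩ := zst_real_of_le (hproper y) hy
    show g (x + y) ≤ ((xs (x + y) : ℝ) : EReal)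
    rw [map_add]
    calc g (x + y) ≤ g x + g y := hadd x y
      _ = ((u + v : ℝ) : EReal) := by rw [hu, hv, EReal.coe_add]
      _ ≤ _ := EReal.coe_le_coe_iff.2 (by linarith)
  · intro c x hx
    rcases lt_trichotomy c 0 with hneg' | h0' | hpos'
    · have he : c • x = (-c) • (-x) := (neg_smul_neg c x).symm
      have hnx : -x ∈ {x : X | g x ≤ (xs x : EReal)} := hneg x hx
      rw [he]
      exact hmempos (-c) (by linarith) _ hnx
    · rw [h0', zero_smul]; exact hzero
    · exact hmempos c hpos' x hx

end ZAux

section ZSep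
variable {X : Type*} [AddCommGroup X] [Module ℝ X] [TopologicalSpace X]
  [IsTopologicalAddGroup X] [ContinuousSMul ℝ X] [LocallyConvexSpace ℝ X]
variable {g : X → EReal}

lemma zst_sep_core (hsub : SublinearFn g) (hproper : ∀ x, g x ≠ ⊥)
    (hlsc : LowerSemicontinuous g) {x₀ : X} {r : ℝ} (hr : (r : EReal) < g x₀) :
    ∃ (φ : X →L[ℝ] ℝ) (α : ℝ), 0 ≤ α ∧ φ x₀ + r * α < 0 ∧
      ∀ x : X, ∀ s : ℝ, g x ≤ (s : EReal) → 0 ≤ φ x + s * α := by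
  obtain ⟨h0, hpos, hadd⟩ := hsub
  set epi : Set (X × ℝ) := {p : X × ℝ | g p.1 ≤ (p.2 : EReal)} with hepi
  -- epi is closed
  have hclosed : IsClosed epi := by
    rw [← isOpen_compl_iff]
    rw [isOpen_iff_mem_nhds]
    rintro ⟨x, t⟩ hmem
    have h' : (t : EReal) < g x := not_le.1 hmem
    obtain ⟨c, hc1, hc2⟩ : ∃ c : ℝ, t < c ∧ (c : EReal) < g x := by
      rcases eq_or_ne (g x) ⊤ with htop | htop
      · exact ⟨t + 1, by linarith, htop ▸ EReal.coe_lt_top _⟩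
      · have hgx : g x = ((g x).toReal : EReal) := (EReal.coe_toReal htop (hproper x)).symm
        rw [hgx] at h'
        obtain ⟨c, hc1, hc2⟩ := exists_between (by exact_mod_cast h' : t < (g x).toReal)
        exact ⟨c, hc1, hgx ▸ (by exact_mod_cast hc2)⟩
    have h1 : {y : X | (c : EReal) < g y} ∈ 𝓝 x := hlsc x (c : EReal) hc2
    have h2 : Set.Iio c ∈ 𝓝 t := Iio_mem_nhds hc1
    rw [nhds_prod_eq]
    filter_upwards [Filter.prod_mem_prod h1 h2] with p hp
    intro hle
    have hpc : p.2 < c := hp.2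
    have hp1 : (c : EReal) < g p.1 := hp.1
    exact absurd (lt_of_le_of_lt (le_trans hle (by exact_mod_cast hpc.le)) hp1) (lt_irrefl _)
  -- epi is convex
  have hconv : Convex ℝ epi := by
    rintro ⟨x, s⟩ hx ⟨y, t⟩ hy a b ha hb hab
    simp only [hepi, Set.mem_setOf_eq] at hx hy ⊢
    obtain ⟨u, hu, hu'⟩ := zst_real_of_le (hproper x) hx
    obtain ⟨v, hv, hv'⟩ := zst_real_of_le (hproper y) hy
    rcases eq_or_lt_of_le ha with ha0 | ha0
    · have hb1 : b = 1 := by linarith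
      simp [← ha0, hb1, hv, Prod.smul_def]
      exact_mod_cast hv'
    rcases eq_or_lt_of_le hb with hb0 | hb0
    · have ha1 : a = 1 := by linarith
      simp [← hb0, ha1, hu, Prod.smul_def]
      exact_mod_cast hu'
    show g (a • x + b • y) ≤ ((a * s + b * t : ℝ) : EReal)
    calc g (a • x + b • y) ≤ g (a • x) + g (b • y) := hadd _ _
      _ = ((a * u + b * v : ℝ) : EReal) := by
          rw [hpos x a ha0, hpos y b hb0, hu, hv]
          push_cast
          ring
      _ ≤ ((a * s + b * t : ℝ) : EReal) := by
          apply EReal.coe_le_coe_iff.2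
          nlinarith
  have hzero : ((0 : X), (0 : ℝ)) ∈ epi := by simp [hepi, h0]
  have hcone : ∀ p ∈ epi, ∀ c : ℝ, 0 < c → c • p ∈ epi := by
    rintro ⟨x, s⟩ hx c hc
    obtain ⟨u, hu, hu'⟩ := zst_real_of_le (hproper x) hx
    show g (c • x) ≤ ((c • s : ℝ) : EReal)
    rw [hpos x c hc, hu, smul_eq_mul]
    exact_mod_cast (by nlinarith : c * u ≤ c * s)
  have hnotmem : (x₀, r) ∉ epi := fun h => absurd (lt_of_lt_of_le hr h) (lt_irrefl _)
  obtain ⟨f, u, hfu, hepi_f⟩ := geometric_hahn_banach_point_closed hconv hclosed hnotmem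
  have hu0 : u < 0 := by simpa [Prod.mk_zero_zero] using hepi_f _ hzero
  have hf0 : ∀ p ∈ epi, 0 ≤ f p := by
    intro p hp
    by_contra hneg
    push_neg at hneg
    have ht : 0 < u / f p := div_pos_of_neg_of_neg hu0 hneg
    have := hepi_f _ (hcone p hp _ ht)
    rw [map_smul, smul_eq_mul, div_mul_cancel₀ u (ne_of_lt hneg)] at this
    exact absurd this (lt_irrefl _)
  set φ : X →L[ℝ] ℝ := f.comp (ContinuousLinearMap.inl ℝ X ℝ) with hφ
  set α : ℝ := f ((0 : X), (1 : ℝ)) with hα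
  have hsplit : ∀ (x : X) (s : ℝ), f (x, s) = φ x + s * α := by
    intro x s
    have h1 : (x, s) = ((x, (0:ℝ)) + ((0:X), s) : X × ℝ) := by simp
    have h2 : (((0:X), s) : X × ℝ) = s • (((0:X), (1:ℝ)) : X × ℝ) := by simp
    rw [h1, map_add, h2, map_smul, smul_eq_mul]
    rfl
  refine ⟨φ, α, ?_, ?_, ?_⟩
  · have : ((0 : X), (1 : ℝ)) ∈ epi := by simp [hepi, h0]
    simpa [hα] using hf0 _ this
  · rw [← hsplit]; exact lt_trans hfu hu0
  · intro x s hxs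
    rw [← hsplit]
    exact hf0 _ hxs

lemma zst_mk_subgrad (hproper : ∀ x, g x ≠ ⊥) (φ : X →L[ℝ] ℝ) {α : ℝ} (hα : 0 < α)
    (hdom : ∀ x : X, ∀ s : ℝ, g x ≤ (s : EReal) → 0 ≤ φ x + s * α) :
    (((-α⁻¹) • φ : X →L[ℝ] ℝ) : WeakDual ℝ X) ∈ subdiff0 g := by
  intro x
  rcases eq_or_ne (g x) ⊤ with htop | htop
  · rw [htop]; exact le_top
  have hgx : g x = ((g x).toReal : EReal) := (EReal.coe_toReal htop (hproper x)).symm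
  have := hdom x (g x).toReal hgx.le
  have hval : (((-α⁻¹) • φ : X →L[ℝ] ℝ) : WeakDual ℝ X) x = -α⁻¹ * φ x := rfl
  change ((-α⁻¹ * φ x : ℝ) : EReal) ≤ g x
  rw [hgx]
  apply EReal.coe_le_coe_iff.2
  rw [neg_mul, neg_le]
  rw [← mul_le_mul_iff_of_pos_left hα]
  have hαinv : α * (α⁻¹ * φ x) = φ x := by field_simp
  nlinarith [this]

lemma zst_subdiff0_nonempty (hsub : SublinearFn g) (hproper : ∀ x, g x ≠ ⊥)
    (hlsc : LowerSemicontinuous g) : ∃ ys : WeakDual ℝ X, ys ∈ subdiff0 g := by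
  have h0 : ((-1 : ℝ) : EReal) < g 0 := by
    rw [hsub.1]; exact_mod_cast (by norm_num : (-1:ℝ) < 0)
  obtain ⟨φ, α, hα, hlt, hdom⟩ := zst_sep_core hsub hproper hlsc h0
  have hφ0 : φ (0 : X) = 0 := map_zero φ
  have hαpos : 0 < α := by
    rcases lt_or_eq_of_le hα with h | h
    · exact h
    · exfalso; rw [hφ0, ← h] at hlt; norm_num at hlt
  exact ⟨_, zst_mk_subgrad hproper φ hαpos hdom⟩

lemma zst_biconj (hsub : SublinearFn g) (hproper : ∀ x, g x ≠ ⊥)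
    (hlsc : LowerSemicontinuous g) {x₀ : X} {r : ℝ} (hr : (r : EReal) < g x₀) :
    ∃ ys ∈ subdiff0 g, r < ys x₀ := by
  obtain ⟨φ, α, hα, hlt, hdom⟩ := zst_sep_core hsub hproper hlsc hr
  rcases lt_or_eq_of_le hα with hαpos | hα0
  · refine ⟨_, zst_mk_subgrad hproper φ hαpos hdom, ?_⟩
    have hval : (((-α⁻¹) • φ : X →L[ℝ] ℝ) : WeakDual ℝ X) x₀ = -α⁻¹ * φ x₀ := rfl
    change r < -α⁻¹ * φ x₀
    rw [← mul_lt_mul_iff_of_pos_left hαpos]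
    have h3 : α * (-α⁻¹ * φ x₀) = -φ x₀ := by
      field_simp
    nlinarith [hlt]
  · -- α = 0
    obtain ⟨ys₀, hys₀⟩ := zst_subdiff0_nonempty hsub hproper hlsc
    have hφx₀ : φ x₀ < 0 := by rw [← hα0] at hlt; simpa using hlt
    have hφnn : ∀ x : X, ∀ s : ℝ, g x ≤ (s : EReal) → 0 ≤ φ x := by
      intro x s h
      have := hdom x s h
      rwa [← hα0, mul_zero, add_zero] at this
    set c : ℝ := max ((r + 1 - ys₀ x₀) / (-φ x₀)) 1 with hc
    have hc1 : (1:ℝ) ≤ c := le_max_right _ _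
    have hc0 : 0 < c := lt_of_lt_of_le one_pos hc1
    set ys : WeakDual ℝ X := ys₀ - c • (show WeakDual ℝ X from φ) with hys
    have hysval : ∀ x : X, ys x = ys₀ x - c * φ x := fun x => rfl
    refine ⟨ys, ?_, ?_⟩
    · intro x
      rcases eq_or_ne (g x) ⊤ with htop | htop
      · rw [htop]; exact le_top
      have hgx : g x = ((g x).toReal : EReal) := (EReal.coe_toReal htop (hproper x)).symm
      have h1 : (ys₀ x : EReal) ≤ g x := hys₀ x
      rw [hgx] at h1 ⊢
      have h1' : ys₀ x ≤ (g x).toReal := by exact_mod_cast h1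
      have h2 := hφnn x (g x).toReal hgx.le
      rw [hysval]
      apply EReal.coe_le_coe_iff.2
      nlinarith
    · rw [hysval]
      have hkey : ((r + 1 - ys₀ x₀) / (-φ x₀)) * (-φ x₀) = r + 1 - ys₀ x₀ := by
        rw [div_mul_cancel₀]
        simpa using ne_of_lt hφx₀
      have hcge : c ≥ (r + 1 - ys₀ x₀) / (-φ x₀) := le_max_left _ _
      nlinarith
end ZSep

lemma zst_level_eq_eqset {X : Type*} [AddCommGroup X] [Module ℝ X] [TopologicalSpace X]
    {g : X → EReal} {xs : WeakDual ℝ X} (hxs : xs ∈ subdiff0 g) :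
    {x : X | g x ≤ (xs x : EReal)} = {x : X | g x = (xs x : EReal)} := by
  ext x
  simp only [Set.mem_setOf_eq]
  exact ⟨fun h => le_antisymm h (hxs x), le_of_eq⟩


variable {X : Type*}

theorem stmt6 [AddCommGroup X] [Module ℝ X] [TopologicalSpace X] [IsTopologicalAddGroup X]
    [ContinuousSMul ℝ X] [LocallyConvexSpace ℝ X] [T2Space X]
    (g : X → EReal) (hsub : SublinearFn g) (hproper : ∀ x, g x ≠ ⊥)
    (hlsc : LowerSemicontinuous g) (xs : WeakDual ℝ X) :
    (xs ∈ qri (subdiff0 g) ↔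
      ∃ S : Submodule ℝ X, {x : X | g x ≤ (xs x : EReal)} = (S : Set X)) ∧
    ((∃ S : Submodule ℝ X, {x : X | g x ≤ (xs x : EReal)} = (S : Set X)) ↔
      LxSet g xs = {x : X | g x ≤ (xs x : EReal)}) ∧
    ((∃ S : Submodule ℝ X, {x : X | g x ≤ (xs x : EReal)} = (S : Set X)) ↔
      (xs ∈ subdiff0 g ∧
        ∃ S : Submodule ℝ X, {x : X | g x = (xs x : EReal)} = (S : Set X))) ∧
    ((xs ∈ subdiff0 g ∧
        ∃ S : Submodule ℝ X, {x : X | g x = (xs x : EReal)} = (S : Set X)) ↔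
      (xs ∈ subdiff0 g ∧ LxSet g xs = {x : X | g x = (xs x : EReal)})) := by
  have hb_subdiff : (∃ S : Submodule ℝ X, {x : X | g x ≤ (xs x : EReal)} = (S : Set X)) →
      xs ∈ subdiff0 g := by
    intro hb
    have hL := zst_L_eq_level xs hsub hproper hb
    intro x
    rcases le_or_gt (g x) ((xs x : ℝ) : EReal) with h | h
    · have hx : x ∈ LxSet g xs := by rw [hL]; exact h
      rw [hx.1]
    · exact h.le
  have hb_iff_b' : (∃ S : Submodule ℝ X, {x : X | g x ≤ (xs x : EReal)} = (S : Set X)) ↔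
      LxSet g xs = {x : X | g x ≤ (xs x : EReal)} := by
    constructor
    · exact fun hb => zst_L_eq_level xs hsub hproper hb
    · intro hb'
      obtain ⟨S, hS⟩ := zst_L_submodule xs hsub hproper
      exact ⟨S, by rw [← hb', hS]⟩
  have hb_iff_c : (∃ S : Submodule ℝ X, {x : X | g x ≤ (xs x : EReal)} = (S : Set X)) ↔
      (xs ∈ subdiff0 g ∧
        ∃ S : Submodule ℝ X, {x : X | g x = (xs x : EReal)} = (S : Set X)) := by
    constructor
    · intro hb
      have hxsA := hb_subdiff hb
      obtain ⟨S, hS⟩ := hb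
      exact ⟨hxsA, S, by rw [← zst_level_eq_eqset hxsA]; exact hS⟩
    · rintro ⟨hxsA, S, hS⟩
      exact ⟨S, by rw [zst_level_eq_eqset hxsA]; exact hS⟩
  have hc_iff_c' : (xs ∈ subdiff0 g ∧
        ∃ S : Submodule ℝ X, {x : X | g x = (xs x : EReal)} = (S : Set X)) ↔
      (xs ∈ subdiff0 g ∧ LxSet g xs = {x : X | g x = (xs x : EReal)}) := by
    constructor
    · rintro ⟨hxsA, hc⟩
      refine ⟨hxsA, ?_⟩
      have hb := hb_iff_c.2 ⟨hxsA, hc⟩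
      have hb' := zst_L_eq_level xs hsub hproper hb
      rw [hb', zst_level_eq_eqset hxsA]
    · rintro ⟨hxsA, hc'⟩
      obtain ⟨S, hS⟩ := zst_L_submodule xs hsub hproper
      exact ⟨hxsA, S, by rw [← hc', hS]⟩
  refine ⟨?_, hb_iff_b', hb_iff_c, hc_iff_c'⟩
  constructor
  · -- (a) → (b)
    intro hq
    have hq' : xs ∈ subdiff0 g ∧ ∃ Sd : Submodule ℝ (WeakDual ℝ X),
        closure (coneGen (subdiff0 g) xs) = (Sd : Set (WeakDual ℝ X)) := hq
    obtain ⟨hxsA, Sd, hSd⟩ := hq'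
    apply zst_level_submodule xs hsub hproper
    intro x hx
    have hcone_le : ∀ w ∈ coneGen (subdiff0 g) xs, w x ≤ 0 := by
      rintro w ⟨t, ht, b, hb, rfl⟩
      have hbx : (b x : EReal) ≤ ((xs x : ℝ) : EReal) := le_trans (hb x) hx
      have hbx' : b x ≤ xs x := by exact_mod_cast hbx
      have he : (t • (b - xs)) x = t * (b x - xs x) := rfl
      rw [he]
      nlinarith
    have hclosedset : IsClosed {w : WeakDual ℝ X | w x ≤ 0} :=
      IsClosed.preimage (WeakDual.eval_continuous x) isClosed_Iic
    have hcl_le : ∀ w ∈ closure (coneGen (subdiff0 g) xs), w x ≤ 0 :=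
      fun w hw => closure_minimal hcone_le hclosedset hw
    have hzero : ∀ b ∈ subdiff0 g, b x = xs x := by
      intro b hb
      have hmem : b - xs ∈ coneGen (subdiff0 g) xs :=
        ⟨1, zero_le_one, b, hb, (one_smul ℝ _).symm⟩
      have h1 : (b - xs) ∈ (Sd : Set (WeakDual ℝ X)) := by
        rw [← hSd]; exact subset_closure hmem
      have h2 : -(b - xs) ∈ (Sd : Set (WeakDual ℝ X)) := Sd.neg_mem h1
      have h1' := hcl_le _ (by rw [hSd]; exact h1)
      have h2' := hcl_le _ (by rw [hSd]; exact h2)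
      have e1 : (b - xs) x = b x - xs x := rfl
      have e2 : (-(b - xs)) x = -(b x - xs x) := rfl
      rw [e1] at h1'
      rw [e2] at h2'
      linarith
    by_contra hgt
    push_neg at hgt
    obtain ⟨ys, hysA, hysv⟩ := zst_biconj hsub hproper hlsc hgt
    have hze := hzero ys hysA
    rw [map_neg, map_neg] at hysv
    linarith
  · -- (b) → (a)
    intro hb
    have hxsA : xs ∈ subdiff0 g := hb_subdiff hb
    obtain ⟨S, hS⟩ := hb
    set K := coneGen (subdiff0 g) xs with hK
    have hK0 : (0 : WeakDual ℝ X) ∈ K := ⟨0, le_refl _, xs, hxsA, by rw [zero_smul]⟩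
    have hKsmul : ∀ (c : ℝ), 0 ≤ c → ∀ w ∈ K, c • w ∈ K := by
      rintro c hc w ⟨t, ht, b, hb', rfl⟩
      exact ⟨c * t, mul_nonneg hc ht, b, hb', smul_smul c t _⟩
    have hAconv : Convex ℝ (subdiff0 g) := by
      intro p hp q hq a b' ha hb' hab x
      rcases eq_or_ne (g x) ⊤ with htop | htop
      · rw [htop]; exact le_top
      have hgx : g x = ((g x).toReal : EReal) := (EReal.coe_toReal htop (hproper x)).symm
      have hp' : p x ≤ (g x).toReal := by
        have := hp x; rw [hgx] at this; exact_mod_cast this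
      have hq' : q x ≤ (g x).toReal := by
        have := hq x; rw [hgx] at this; exact_mod_cast this
      have he : (a • p + b' • q) x = a * p x + b' * q x := rfl
      rw [he, hgx]
      apply EReal.coe_le_coe_iff.2
      have h3 : a * (g x).toReal + b' * (g x).toReal = (g x).toReal := by
        rw [← add_mul, hab, one_mul]
      linarith [mul_le_mul_of_nonneg_left hp' ha, mul_le_mul_of_nonneg_left hq' hb']
    have hKadd : ∀ w₁ ∈ K, ∀ w₂ ∈ K, w₁ + w₂ ∈ K := by
      rintro _ ⟨t, ht, b, hb', rfl⟩ _ ⟨s, hs, d, hd', rfl⟩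
      rcases eq_or_lt_of_le (add_nonneg ht hs) with hts | hts
      · have ht0 : t = 0 := by linarith
        have hs0 : s = 0 := by linarith
        rw [ht0, hs0, zero_smul, zero_smul, add_zero]
        exact hK0
      · refine ⟨t + s, le_of_lt hts, (t / (t + s)) • b + (s / (t + s)) • d, ?_, ?_⟩
        · exact hAconv hb' hd' (by positivity) (by positivity)
            (by field_simp)
        · have h1 : (t + s) * (t / (t + s)) = t := by field_simp
          have h2 : (t + s) * (s / (t + s)) = s := by field_simp
          rw [smul_sub, smul_sub, smul_sub, smul_add, smul_smul, smul_smul, h1, h2, add_smul]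
          abel
    have hKconv : Convex ℝ K := by
      intro w1 h1 w2 h2 a b' ha hb' hab
      exact hKadd _ (hKsmul a ha w1 h1) _ (hKsmul b' hb' w2 h2)
    haveI : LocallyConvexSpace ℝ (WeakDual ℝ X) := WeakBilin.locallyConvexSpace
    have hC0 : (0 : WeakDual ℝ X) ∈ closure K := subset_closure hK0
    have hCadd : ∀ p ∈ closure K, ∀ q ∈ closure K, p + q ∈ closure K := by
      let M : AddSubmonoid (WeakDual ℝ X) :=
        { carrier := K, add_mem' := fun h1 h2 => hKadd _ h1 _ h2, zero_mem' := hK0 }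
      intro p hp q hq
      exact M.topologicalClosure.add_mem hp hq
    have hCsmul : ∀ (c : ℝ), 0 ≤ c → ∀ p ∈ closure K, c • p ∈ closure K := by
      intro c hc p hp
      have hcont : Continuous fun w : WeakDual ℝ X => c • w := continuous_const_smul c
      have h2 := image_closure_subset_closure_image hcont (s := K) ⟨p, hp, rfl⟩
      have himg : (fun w : WeakDual ℝ X => c • w) '' K ⊆ K := by
        rintro _ ⟨w, hw, rfl⟩
        exact hKsmul c hc w hw
      exact closure_mono himg h2
    have hnegKey : ∀ b ∈ subdiff0 g, xs - b ∈ closure K := by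
      intro b hb'
      by_contra hz
      obtain ⟨f, u, hfz, hgt⟩ :=
        geometric_hahn_banach_point_closed hKconv.closure isClosed_closure hz
      have hu0 : u < 0 := by simpa using hgt 0 hC0
      have hfnn : ∀ w ∈ K, 0 ≤ f w := by
        intro w hw
        by_contra hneg
        push_neg at hneg
        have ht : 0 < u / f w := div_pos_of_neg_of_neg hu0 hneg
        have := hgt _ (subset_closure (hKsmul _ (le_of_lt ht) w hw))
        rw [map_smul, smul_eq_mul, div_mul_cancel₀ u (ne_of_lt hneg)] at this
        exact absurd this (lt_irrefl _)
      obtain ⟨x, hx⟩ := zst_dualEval f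
      have hAx : ∀ p ∈ subdiff0 g, xs x ≤ p x := by
        intro p hp
        have hmem : p - xs ∈ K := ⟨1, zero_le_one, p, hp, (one_smul ℝ _).symm⟩
        have hval := hfnn _ hmem
        rw [hx] at hval
        have e : (p - xs) x = p x - xs x := rfl
        rw [e] at hval
        linarith
      have hgneg : g (-x) ≤ ((xs (-x) : ℝ) : EReal) := by
        by_contra hgt2
        push_neg at hgt2
        obtain ⟨ys, hysA, hysv⟩ := zst_biconj hsub hproper hlsc hgt2
        have hax := hAx ys hysA
        rw [map_neg, map_neg] at hysv
        linarith
      have hxS : -x ∈ (S : Set X) := by rw [← hS]; exact hgneg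
      have hx2 : x ∈ (S : Set X) := by
        have := S.neg_mem hxS; rwa [neg_neg] at this
      have hgx : g x ≤ ((xs x : ℝ) : EReal) := by
        have : x ∈ {x : X | g x ≤ (xs x : EReal)} := by rw [hS]; exact hx2
        exact this
      have hbx : b x ≤ xs x := by
        have := le_trans (hb' x) hgx
        exact_mod_cast this
      have hfval : f (xs - b) = xs x - b x := by rw [hx]; rfl
      rw [hfval] at hfz
      linarith
    have hCneg : ∀ p ∈ closure K, -p ∈ closure K := by
      have hnegK : ∀ w ∈ K, -w ∈ closure K := by
        rintro _ ⟨t, ht, b, hb', rfl⟩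
        have he : -(t • (b - xs)) = t • (xs - b) := by rw [← smul_neg, neg_sub]
        rw [he]
        exact hCsmul t ht _ (hnegKey b hb')
      intro p hp
      have hcont : Continuous fun w : WeakDual ℝ X => -w := continuous_neg
      have h2 := image_closure_subset_closure_image hcont (s := K) ⟨p, hp, rfl⟩
      have himg : (fun w : WeakDual ℝ X => -w) '' K ⊆ closure K := by
        rintro _ ⟨w, hw, rfl⟩
        exact hnegK w hw
      exact closure_minimal himg isClosed_closure h2
    show xs ∈ subdiff0 g ∧ ∃ Sd : Submodule ℝ (WeakDual ℝ X),
        closure (coneGen (subdiff0 g) xs) = (Sd : Set (WeakDual ℝ X))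
    refine ⟨hxsA, ⟨{ carrier := closure K
                     add_mem' := fun hp hq => hCadd _ hp _ hq
                     zero_mem' := hC0
                     smul_mem' := ?_ }, rfl⟩⟩
    intro c p hp
    rcases le_or_gt 0 c with hc | hc
    · exact hCsmul c hc p hp
    · have he : c • p = (-c) • (-p) := (neg_smul_neg c p).symm
      rw [he]
      exact hCsmul (-c) (by linarith) _ (hCneg p hp)
end
end

section
/- Let X be a real separated locally convex space, let g : X → ℝ ∪ {+∞} be a proper lower semicontinuous sublinear function, and let x* ∈ X*. Then x* ∈ qi ∂g(0) (quasi-interior taken in X* with the weak* topology) if and only if {x ∈ X : g(x) ≤ ⟨x, x*⟩} = {0}. -/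
open Filter Topology Set Pointwise TopologicalSpace

noncomputable section

section Aux

lemma wd_add_apply {X : Type*} [AddCommGroup X] [Module ℝ X] [TopologicalSpace X]
    (y y' : WeakDual ℝ X) (z : X) : (y + y') z = y z + y' z := rfl

lemma wd_smul_apply {X : Type*} [AddCommGroup X] [Module ℝ X] [TopologicalSpace X]
    (c : ℝ) (y : WeakDual ℝ X) (z : X) : (c • y) z = c * y z := rfl

lemma wd_sub_apply {X : Type*} [AddCommGroup X] [Module ℝ X] [TopologicalSpace X]
    (y y' : WeakDual ℝ X) (z : X) : (y - y') z = y z - y' z := rfl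

variable {X : Type*} [AddCommGroup X] [Module ℝ X] [TopologicalSpace X]

lemma exists_eval_eq (f : WeakDual ℝ X →L[ℝ] ℝ) : ∃ x : X, ∀ w : WeakDual ℝ X, f w = w x := by
  have h1 : f ⁻¹' (Metric.ball 0 1) ∈ 𝓝 (0 : WeakDual ℝ X) :=
    f.continuous.continuousAt.preimage_mem_nhds
      (by rw [map_zero]; exact Metric.ball_mem_nhds _ one_pos)
  have hnhds : 𝓝 (0 : WeakDual ℝ X) =
      Filter.comap (fun (w : WeakDual ℝ X) (x : X) => w x) (𝓝 (fun y => (0 : WeakDual ℝ X) y)) :=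
    nhds_induced _ 0
  rw [hnhds, Filter.mem_comap] at h1
  obtain ⟨s, hs, hsub⟩ := h1
  have h0 : (fun y => (0 : WeakDual ℝ X) y) = (fun _ : X => (0:ℝ)) := by funext y; rfl
  rw [h0, nhds_pi, Filter.mem_pi] at hs
  obtain ⟨I, hIfin, t, ht, hIt⟩ := hs
  have hker : ∀ w : WeakDual ℝ X, (∀ i ∈ I, w i = 0) → f w = 0 := by
    intro w hw
    by_contra hfw
    have hc : ∀ c : ℝ, |c| * |f w| < 1 := by
      intro c
      have hmem : (fun x : X => (c • w) x) ∈ I.pi t := by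
        intro i hi
        show (c • w) i ∈ t i
        have : (c • w) i = 0 := by
          show c * w i = 0
          rw [hw i hi, mul_zero]
        rw [this]; exact mem_of_mem_nhds (ht i)
      have h3 := hsub (hIt hmem)
      simpa [Real.dist_eq] using h3
    have h2 := hc ((|f w|)⁻¹ * 2)
    have hpos : (0:ℝ) < |f w| := abs_pos.mpr hfw
    rw [abs_mul, abs_inv, abs_abs, abs_two] at h2
    have : |f w|⁻¹ * 2 * |f w| = 2 := by field_simp
    rw [this] at h2
    norm_num at h2
  haveI : Finite I := hIfin.to_subtype
  set L : I → (WeakDual ℝ X →ₗ[ℝ] ℝ) := fun i => (topDualPairing ℝ X).flip (i : X) with hL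
  have hK : ⨅ i, LinearMap.ker (L i) ≤ LinearMap.ker (f : WeakDual ℝ X →ₗ[ℝ] ℝ) := by
    intro w hw
    simp only [Submodule.mem_iInf, LinearMap.mem_ker] at hw ⊢
    exact hker w fun i hi => hw ⟨i, hi⟩
  haveI := Fintype.ofFinite I
  have := (Submodule.mem_span_range_iff_exists_fun ℝ).1 (mem_span_of_iInf_ker_le_ker hK)
  obtain ⟨c, hcf⟩ := this
  refine ⟨∑ i : I, c i • (i : X), fun w => ?_⟩
  have := congrFun (congrArg (fun (φ : WeakDual ℝ X →ₗ[ℝ] ℝ) => (φ : WeakDual ℝ X → ℝ)) hcf) w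
  simp only [LinearMap.coe_sum, Finset.sum_apply, LinearMap.smul_apply, smul_eq_mul] at this
  rw [ContinuousLinearMap.coe_coe] at this
  rw [← this, map_sum]
  refine Finset.sum_congr rfl fun i _ => ?_
  rw [map_smul]
  simp only [hL, smul_eq_mul]
  rfl

lemma subdiff0_convex (g : X → EReal) : Convex ℝ (subdiff0 g) := by
  intro y hy y' hy' a b ha hb hab
  intro z
  by_cases hz : g z = ⊤
  · rw [hz]; exact le_top
  · have hbot : g z ≠ ⊥ := by
      intro hb'
      have := hy z
      rw [hb', le_bot_iff] at this
      exact EReal.coe_ne_bot _ this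
    have hgz : g z = ((g z).toReal : EReal) := (EReal.coe_toReal hz hbot).symm
    have h1 : (y z : ℝ) ≤ (g z).toReal := by
      have := hy z; rw [hgz] at this; exact EReal.coe_le_coe_iff.mp this
    have h2 : (y' z : ℝ) ≤ (g z).toReal := by
      have := hy' z; rw [hgz] at this; exact EReal.coe_le_coe_iff.mp this
    have happ : (a • y + b • y') z = a * y z + b * y' z := by
      rw [wd_add_apply, wd_smul_apply, wd_smul_apply]
    rw [happ, hgz, EReal.coe_le_coe_iff]
    have h3 : a * (g z).toReal + b * (g z).toReal = (g z).toReal := by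
      rw [← add_mul, hab, one_mul]
    linarith [mul_le_mul_of_nonneg_left h1 ha, mul_le_mul_of_nonneg_left h2 hb]

lemma coneGen_convex {F : Type*} [AddCommGroup F] [Module ℝ F] [TopologicalSpace F]
    {A : Set F} (hA : Convex ℝ A) {a : F} (ha : a ∈ A) : Convex ℝ (coneGen A a) := by
  rintro x ⟨t1, ht1, b1, hb1, rfl⟩ y ⟨t2, ht2, b2, hb2, rfl⟩ c d hc hd hcd
  by_cases hz : c * t1 + d * t2 = 0
  · have h1 : c * t1 = 0 := by nlinarith [mul_nonneg hc ht1, mul_nonneg hd ht2]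
    have h2 : d * t2 = 0 := by nlinarith [mul_nonneg hc ht1, mul_nonneg hd ht2]
    refine ⟨0, le_refl 0, a, ha, ?_⟩
    rw [smul_smul, smul_smul, h1, h2, zero_smul, zero_smul, add_zero, zero_smul]
  · set s := c * t1 + d * t2 with hsdef
    have hs : 0 < s := lt_of_le_of_ne (by positivity) (Ne.symm hz)
    refine ⟨s, hs.le, (c*t1/s) • b1 + (d*t2/s) • b2, ?_, ?_⟩
    · exact hA hb1 hb2 (by positivity) (by positivity) (by field_simp; exact hsdef.symm)
    · have e1 : s * (c * t1 / s) = c * t1 := by field_simp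
      have e2 : s * (d * t2 / s) = d * t2 := by field_simp
      have key : s • ((c * t1 / s) • b1 + (d * t2 / s) • b2 - a)
          = (c * t1) • b1 + (d * t2) • b2 - s • a := by
        rw [smul_sub, smul_add, smul_smul, smul_smul, e1, e2]
      rw [key, hsdef]
      module

lemma support_le {X : Type*} [AddCommGroup X] [Module ℝ X] [TopologicalSpace X]
    [IsTopologicalAddGroup X] [ContinuousSMul ℝ X] [LocallyConvexSpace ℝ X]
    (g : X → EReal) (hsub : SublinearFn g) (hproper : ∀ x, g x ≠ ⊥)
    (hlsc : LowerSemicontinuous g) (xs : WeakDual ℝ X) (hxs : xs ∈ subdiff0 g)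
    (x : X) (H : ∀ y ∈ subdiff0 g, y x ≤ xs x) : g x ≤ ((xs x : ℝ) : EReal) := by
  obtain ⟨hg0, hhom, hadd⟩ := hsub
  by_contra hgt
  set K : Set (X × ℝ) := {p | g p.1 ≤ ((p.2 : ℝ) : EReal)} with hKdef
  have hKclosed : IsClosed K := by
    have h1 : IsClosed {p : X × EReal | g p.1 ≤ p.2} := hlsc.isClosed_epigraph
    have h2 : K = (fun p : X × ℝ => (p.1, (p.2 : EReal))) ⁻¹' {p : X × EReal | g p.1 ≤ p.2} := rfl
    rw [h2]
    exact h1.preimage (continuous_fst.prodMk (continuous_coe_real_ereal.comp continuous_snd))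
  have hKconv : Convex ℝ K := by
    rintro ⟨p1, p2⟩ hp ⟨q1, q2⟩ hq a b ha hb hab
    simp only [hKdef, Set.mem_setOf_eq] at hp hq ⊢
    rcases eq_or_lt_of_le ha with ha0 | ha
    · have hb1 : b = 1 := by linarith
      simp only [← ha0, hb1, zero_smul, one_smul, zero_add, zero_mul, smul_eq_mul, one_mul]
      exact hq
    rcases eq_or_lt_of_le hb with hb0 | hb
    · have ha1 : a = 1 := by linarith
      simp only [← hb0, ha1, zero_smul, one_smul, add_zero, zero_mul, smul_eq_mul, one_mul]
      exact hp
    have e1 : g (a • p1 + b • q1) ≤ g (a • p1) + g (b • q1) := hadd _ _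
    rw [hhom p1 a ha, hhom q1 b hb] at e1
    have e2 : (a : EReal) * g p1 ≤ (a : EReal) * ((p2 : ℝ) : EReal) :=
      mul_le_mul_of_nonneg_left hp (by exact_mod_cast ha.le)
    have e3 : (b : EReal) * g q1 ≤ (b : EReal) * ((q2 : ℝ) : EReal) :=
      mul_le_mul_of_nonneg_left hq (by exact_mod_cast hb.le)
    calc g (a • p1 + b • q1) ≤ (a : EReal) * g p1 + (b : EReal) * g q1 := e1
      _ ≤ (a : EReal) * (p2 : EReal) + (b : EReal) * (q2 : EReal) := add_le_add e2 e3
      _ = (((a * p2 + b * q2 : ℝ)) : EReal) := by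
          rw [EReal.coe_add, EReal.coe_mul, EReal.coe_mul]
      _ = ((((a • p2 + b • q2 : ℝ)) : ℝ) : EReal) := by norm_num
  have hxK : (x, (xs x : ℝ)) ∉ K := hgt
  obtain ⟨F, u, hFu, hup⟩ := geometric_hahn_banach_closed_point hKconv hKclosed hxK
  have h00 : ((0 : X), (0 : ℝ)) ∈ K := by
    simp only [hKdef, Set.mem_setOf_eq, hg0, EReal.coe_zero, le_refl]
  have hu0 : 0 < u := by
    have := hFu _ h00
    have hz : ((0 : X), (0 : ℝ)) = (0 : X × ℝ) := rfl
    rwa [hz, map_zero] at this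
  have hFle : ∀ p ∈ K, F p ≤ 0 := by
    intro p hp
    by_contra hFp
    push_neg at hFp
    have htp : ∀ t : ℝ, 0 < t → t • p ∈ K := by
      intro t ht
      simp only [hKdef, Set.mem_setOf_eq] at hp ⊢
      have : (t • p).1 = t • p.1 := rfl
      rw [this, hhom p.1 t ht]
      have h2 : ((t • p).2 : EReal) = ((t * p.2 : ℝ) : EReal) := rfl
      rw [h2, EReal.coe_mul]
      exact mul_le_mul_of_nonneg_left hp (by exact_mod_cast ht.le)
    have := hFu _ (htp (2 * u / F p) (by positivity))
    rw [map_smul, smul_eq_mul] at this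
    rw [div_mul_eq_mul_div, mul_div_assoc, div_self hFp.ne', mul_one] at this
    linarith
  set φ : X →L[ℝ] ℝ := F.comp (ContinuousLinearMap.inl ℝ X ℝ) with hφdef
  set sc : ℝ := F (0, 1) with hscdef
  have hdec : ∀ (z : X) (t : ℝ), F (z, t) = φ z + t * sc := by
    intro z t
    have h1 : (z, t) = (z, 0) + t • ((0 : X), (1 : ℝ)) := by
      simp [Prod.ext_iff]
    rw [h1, map_add, map_smul, smul_eq_mul]
    rfl
  have hsle : sc ≤ 0 := by
    have h1 : ((0 : X), (1 : ℝ)) ∈ K := by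
      simp only [hKdef, Set.mem_setOf_eq, hg0]
      exact_mod_cast zero_le_one
    exact hFle _ h1
  have hdom : ∀ z : X, g z ≠ ⊤ → φ z + (g z).toReal * sc ≤ 0 := by
    intro z hz
    have h1 : (z, (g z).toReal) ∈ K := by
      simp only [hKdef, Set.mem_setOf_eq]
      rw [EReal.coe_toReal hz (hproper z)]
    have := hFle _ h1
    rwa [hdec] at this
  have hx : 0 < φ x + (xs x) * sc := by
    have := hu0.trans hup
    rwa [hdec] at this
  rcases eq_or_lt_of_le hsle with hs0 | hs
  · -- sc = 0
    have hφx : 0 < φ x := by rw [hs0] at hx; simpa using hx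
    set y : WeakDual ℝ X := xs + (show WeakDual ℝ X from φ) with hydef
    have hyA : y ∈ subdiff0 g := by
      intro z
      by_cases hz : g z = ⊤
      · rw [hz]; exact le_top
      · have hgz : g z = ((g z).toReal : EReal) := (EReal.coe_toReal hz (hproper z)).symm
        have h1 : (xs z : ℝ) ≤ (g z).toReal := by
          have := hxs z; rw [hgz] at this; exact EReal.coe_le_coe_iff.mp this
        have h2 : φ z ≤ 0 := by have := hdom z hz; rw [hs0] at this; simpa using this
        have happ : y z = xs z + φ z := rfl
        rw [happ, hgz, EReal.coe_le_coe_iff]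
        linarith
    have := H y hyA
    have happ : y x = xs x + φ x := rfl
    rw [happ] at this
    linarith
  · -- sc < 0
    set y : WeakDual ℝ X := (-sc)⁻¹ • (show WeakDual ℝ X from φ) with hydef
    have hinv : 0 < (-sc)⁻¹ := inv_pos.mpr (neg_pos.mpr hs)
    have happ : ∀ z, y z = (-sc)⁻¹ * φ z := fun z => rfl
    have hyA : y ∈ subdiff0 g := by
      intro z
      by_cases hz : g z = ⊤
      · rw [hz]; exact le_top
      · have hgz : g z = ((g z).toReal : EReal) := (EReal.coe_toReal hz (hproper z)).symm
        have h2 := hdom z hz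
        rw [happ, hgz, EReal.coe_le_coe_iff, inv_mul_le_iff₀ (neg_pos.mpr hs)]
        linarith
    have := H y hyA
    rw [happ, inv_mul_le_iff₀ (neg_pos.mpr hs)] at this
    linarith

end Aux

variable {X : Type*}

theorem stmt7 [AddCommGroup X] [Module ℝ X] [TopologicalSpace X] [IsTopologicalAddGroup X]
    [ContinuousSMul ℝ X] [LocallyConvexSpace ℝ X] [T2Space X]
    (g : X → EReal) (hsub : SublinearFn g) (hproper : ∀ x, g x ≠ ⊥)
    (hlsc : LowerSemicontinuous g) (xs : WeakDual ℝ X) :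
    xs ∈ qi (subdiff0 g) ↔ {x : X | g x ≤ (xs x : EReal)} = {0} := by
  haveI : LocallyConvexSpace ℝ (WeakDual ℝ X) := WeakBilin.locallyConvexSpace
  have hg0 : g 0 = 0 := hsub.1
  constructor
  · rintro ⟨hxsA, hclos⟩
    ext z
    simp only [Set.mem_setOf_eq, Set.mem_singleton_iff]
    constructor
    · intro hz
      have hev : ∀ w ∈ coneGen (subdiff0 g) xs, w z ≤ 0 := by
        rintro w ⟨t, ht, b, hb, rfl⟩
        have happ : (t • (b - xs)) z = t * (b z - xs z) := by
          rw [wd_smul_apply, wd_sub_apply]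
        have hbz : b z ≤ xs z := by
          have h1 : ((b z : ℝ) : EReal) ≤ ((xs z : ℝ) : EReal) := (hb z).trans hz
          exact EReal.coe_le_coe_iff.mp h1
        rw [happ]
        have : b z - xs z ≤ 0 := by linarith
        exact mul_nonpos_iff.mpr (Or.inl ⟨ht, this⟩)
      have hclosed : IsClosed {w : WeakDual ℝ X | w z ≤ 0} := by
        have hc : Continuous fun w : WeakDual ℝ X => w z :=
          WeakBilin.eval_continuous (topDualPairing ℝ X) z
        exact isClosed_le hc continuous_const
      have hsubs : closure (coneGen (subdiff0 g) xs) ⊆ {w : WeakDual ℝ X | w z ≤ 0} :=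
        closure_minimal hev hclosed
      rw [hclos] at hsubs
      have hall : ∀ w : WeakDual ℝ X, w z = 0 := by
        intro w
        have h1 : w z ≤ 0 := hsubs (Set.mem_univ w)
        have h2 : (-w) z ≤ 0 := hsubs (Set.mem_univ (-w))
        have h3 : (-w) z = -(w z) := rfl
        rw [h3] at h2
        linarith
      by_contra h0
      obtain ⟨f, hf⟩ := SeparatingDual.exists_ne_zero (R := ℝ) h0
      exact hf (hall (show WeakDual ℝ X from f))
    · intro hz
      rw [hz, hg0, map_zero]
      exact le_of_eq (by norm_num)
  · intro hset
    have hxsA : xs ∈ subdiff0 g := by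
      intro z
      by_cases hz0 : z = 0
      · rw [hz0, map_zero, hg0]
        exact le_of_eq (by norm_num)
      · have h1 : z ∉ ({0} : Set X) := hz0
        rw [← hset] at h1
        simp only [Set.mem_setOf_eq] at h1
        exact (not_le.mp h1).le
    refine ⟨hxsA, ?_⟩
    by_contra hne
    obtain ⟨w0, hw0⟩ := Set.ne_univ_iff_exists_notMem _ |>.mp hne
    have hCconv : Convex ℝ (coneGen (subdiff0 g) xs) := coneGen_convex (subdiff0_convex g) hxsA
    obtain ⟨f, u, hfC, hfw⟩ :=
      geometric_hahn_banach_closed_point hCconv.closure isClosed_closure hw0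
    have h0C : (0 : WeakDual ℝ X) ∈ coneGen (subdiff0 g) xs :=
      ⟨0, le_refl 0, xs, hxsA, (zero_smul ℝ _).symm⟩
    have hu0 : 0 < u := by
      have := hfC _ (subset_closure h0C)
      rwa [map_zero] at this
    have hfle : ∀ w ∈ coneGen (subdiff0 g) xs, f w ≤ 0 := by
      rintro w hw
      by_contra hfp
      push_neg at hfp
      obtain ⟨t, ht, b, hb, rfl⟩ := hw
      have hmem : (2 * u / f (t • (b - xs))) • (t • (b - xs)) ∈ coneGen (subdiff0 g) xs := by
        rw [smul_smul]
        exact ⟨_, mul_nonneg (by positivity) ht, b, hb, rfl⟩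
      have := hfC _ (subset_closure hmem)
      rw [map_smul, smul_eq_mul, div_mul_eq_mul_div, mul_div_assoc, div_self hfp.ne',
        mul_one] at this
      linarith
    obtain ⟨x, hx_eval⟩ := exists_eval_eq f
    have H : ∀ y ∈ subdiff0 g, y x ≤ xs x := by
      intro y hy
      have hmem : y - xs ∈ coneGen (subdiff0 g) xs := ⟨1, zero_le_one, y, hy, (one_smul ℝ _).symm⟩
      have := hfle _ hmem
      rw [hx_eval, wd_sub_apply] at this
      linarith
    have hgx : g x ≤ ((xs x : ℝ) : EReal) := support_le g hsub hproper hlsc xs hxsA x H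
    have hx0 : x = 0 := by
      have : x ∈ {x : X | g x ≤ (xs x : EReal)} := hgx
      rw [hset] at this
      exact this
    have : f w0 = 0 := by rw [hx_eval, hx0, map_zero]
    linarith
end
end

section
/- Let X be a real separated locally convex space, let g : X → ℝ ∪ {+∞} be a proper lower semicontinuous sublinear function, and let x* ∈ ∂g(0). Let L_g := L_{x*} (this set does not depend on the choice of x* ∈ ∂g(0)) and let X̂ := X/L_g be the quotient space with the quotient topology, with natural projection π : X → X̂. Then the function ĝ_{x*} : X̂ → ℝ ∪ {+∞} given by ĝ_{x*}(π(x)) := g(x) − ⟨x, x*⟩ is well defined, proper, lower semicontinuous, sublinear and nonnegative, and {x̂ ∈ X̂ : ĝ_{x*}(x̂) = ĝ_{x*}(−x̂) = 0} = {0̂}. Moreover, x* ∈ qri ∂g(0) if and only if 0 ∈ qi ∂ĝ_{x*}(0̂). -/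
open Filter Topology Set Pointwise TopologicalSpace

noncomputable section

set_option linter.unusedSectionVars false

lemma ereal_sub_coe_ne_bot {a : EReal} (ha : a ≠ ⊥) (r : ℝ) : a - (r:EReal) ≠ ⊥ := by
  induction a using EReal.rec with
  | bot => simp at ha
  | top => simp [EReal.top_sub_coe]
  | coe a => rw [← EReal.coe_sub]; exact EReal.coe_ne_bot _

lemma ereal_sub_add_sub (a b : EReal) (r s : ℝ) (ha : a ≠ ⊥) (hb : b ≠ ⊥) :
    (a - (r:EReal)) + (b - (s:EReal)) = (a + b) - (((r+s : ℝ)):EReal) := by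
  induction a using EReal.rec with
  | bot => simp at ha
  | top =>
      rw [EReal.top_sub_coe, EReal.top_add_of_ne_bot (ereal_sub_coe_ne_bot hb s),
        EReal.top_add_of_ne_bot hb, EReal.top_sub_coe]
  | coe a =>
      induction b using EReal.rec with
      | bot => simp at hb
      | top =>
          rw [EReal.top_sub_coe, EReal.add_top_of_ne_bot (ereal_sub_coe_ne_bot (EReal.coe_ne_bot a) r),
            EReal.add_top_of_ne_bot (EReal.coe_ne_bot a), EReal.top_sub_coe]
      | coe b => push_cast; norm_cast; ring

lemma ereal_coe_mul_sub (t : ℝ) (ht : 0 < t) (a : EReal) (r : ℝ) (ha : a ≠ ⊥) :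
    (t : EReal) * (a - (r:EReal)) = (t:EReal) * a - ((t*r : ℝ):EReal) := by
  induction a using EReal.rec with
  | bot => simp at ha
  | top =>
      rw [EReal.top_sub_coe, EReal.mul_top_of_pos (by exact_mod_cast ht),
        EReal.top_sub_coe]
  | coe a => push_cast; norm_cast; ring

lemma ereal_sub_coe_eq_zero {a : EReal} {r : ℝ} : a - (r:EReal) = 0 ↔ a = (r:EReal) := by
  constructor
  · intro h
    have := congrArg (· + (r:EReal)) h
    simpa [EReal.sub_add_cancel] using this
  · rintro rfl; rw [← EReal.coe_sub]; norm_num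

section H
variable {X : Type*} [AddCommGroup X] [Module ℝ X] [TopologicalSpace X] [IsTopologicalAddGroup X]
  [ContinuousSMul ℝ X]
  (g : X → EReal) (hsub : SublinearFn g) (hproper : ∀ x, g x ≠ ⊥)
  (hlsc : LowerSemicontinuous g) (xs : WeakDual ℝ X) (hxs : xs ∈ subdiff0 g)

noncomputable def hFn : X → EReal := fun x => g x - ((xs x : ℝ) : EReal)

include hproper in
lemma hFn_ne_bot (x : X) : hFn g xs x ≠ ⊥ := ereal_sub_coe_ne_bot (hproper x) _

include hproper hxs in
lemma hFn_nonneg (x : X) : 0 ≤ hFn g xs x := by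
  unfold hFn
  refine (EReal.le_sub_iff_add_le (.inr (hproper x)) (.inl (EReal.coe_ne_top _))).2 ?_
  simpa using hxs x

include hsub in
lemma hFn_zero : hFn g xs 0 = 0 := by
  simp [hFn, hsub.1]

include hsub hproper in
lemma hFn_add (x y : X) : hFn g xs (x + y) ≤ hFn g xs x + hFn g xs y := by
  unfold hFn
  rw [ereal_sub_add_sub _ _ _ _ (hproper x) (hproper y), map_add]
  exact EReal.sub_le_sub (hsub.2.2 x y) le_rfl

include hsub hproper in
lemma hFn_smul (x : X) (t : ℝ) (ht : 0 < t) : hFn g xs (t • x) = (t:EReal) * hFn g xs x := by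
  unfold hFn
  rw [ereal_coe_mul_sub t ht _ _ (hproper x), hsub.2.1 x t ht, map_smul, smul_eq_mul]

lemma hFn_eq_zero_iff (x : X) : (hFn g xs x = 0 ∧ hFn g xs (-x) = 0) ↔ x ∈ LxSet g xs := by
  unfold hFn LxSet
  rw [ereal_sub_coe_eq_zero, ereal_sub_coe_eq_zero, map_neg]
  simp

include hsub hproper in
lemma hFn_invariant {l : X} (hl : l ∈ LxSet g xs) (x : X) : hFn g xs (x + l) = hFn g xs x := by
  have h1 : hFn g xs l = 0 := ((hFn_eq_zero_iff g xs l).2 hl).1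
  have h2 : hFn g xs (-l) = 0 := by
    rw [← hFn_eq_zero_iff g xs] at hl
    have : hFn g xs (- -l) = 0 := by simpa using hl.1
    simpa using hl.2
  refine le_antisymm ?_ ?_
  · have := hFn_add g hsub hproper xs x l
    rwa [h1, add_zero] at this
  · have := hFn_add g hsub hproper xs (x + l) (-l)
    rwa [h2, add_zero, add_neg_cancel_right] at this
end H

section H2
variable {X : Type*} [AddCommGroup X] [Module ℝ X] [TopologicalSpace X] [IsTopologicalAddGroup X]
  [ContinuousSMul ℝ X]
  (g : X → EReal) (hsub : SublinearFn g) (hproper : ∀ x, g x ≠ ⊥)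
  (hlsc : LowerSemicontinuous g) (xs : WeakDual ℝ X) (hxs : xs ∈ subdiff0 g)

include hproper hlsc in
lemma hFn_lsc : LowerSemicontinuous (hFn g xs) := by
  rw [lowerSemicontinuous_iff_isOpen_preimage]
  intro c
  rw [isOpen_iff_mem_nhds]
  intro x₀ hx₀
  simp only [mem_preimage, mem_Ioi] at hx₀
  induction c using EReal.rec with
  | top => exact absurd hx₀ (by simp)
  | bot =>
      have : (hFn g xs) ⁻¹' Ioi ⊥ = univ := by
        ext x; simp [bot_lt_iff_ne_bot, hFn_ne_bot g hproper xs x]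
      rw [this]; exact univ_mem
  | coe c =>
      have h1 : ((c + xs x₀ : ℝ) : EReal) < g x₀ := by
        have := (EReal.lt_sub_iff_add_lt (.inl (EReal.coe_ne_bot _)) (.inl (EReal.coe_ne_top _))).1 hx₀
        rw [← EReal.coe_add] at this
        exact this
      obtain ⟨m, hm1, hm2⟩ := EReal.exists_between_coe_real h1
      have hδ : c + xs x₀ < m := by exact_mod_cast hm1
      set U : Set X := {x | (m : EReal) < g x} ∩ {x | xs x < m - c}
      have hU : IsOpen U := by
        refine IsOpen.inter ?_ ?_
        · exact hlsc.isOpen_preimage m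
        · exact isOpen_lt (map_continuous xs) continuous_const
      have hx₀U : x₀ ∈ U := ⟨hm2, by dsimp; linarith⟩
      refine Filter.mem_of_superset (hU.mem_nhds hx₀U) ?_
      rintro x ⟨hx1, hx2⟩
      have hx2' : xs x < m - c := hx2
      have hx1' : (m : EReal) < g x := hx1
      simp only [mem_preimage, mem_Ioi]
      refine (EReal.lt_sub_iff_add_lt (.inl (EReal.coe_ne_bot _)) (.inl (EReal.coe_ne_top _))).2 ?_
      calc ((c : EReal) + (xs x : ℝ)) = ((c + xs x : ℝ) : EReal) := by rw [EReal.coe_add]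
      _ < (m : EReal) := by exact_mod_cast (by linarith : c + xs x < m)
      _ < g x := hx1'

end H2

section H3
variable {X : Type*} [AddCommGroup X] [Module ℝ X] [TopologicalSpace X] [IsTopologicalAddGroup X]
  [ContinuousSMul ℝ X]
  (g : X → EReal) (hsub : SublinearFn g) (hproper : ∀ x, g x ≠ ⊥)
  (hlsc : LowerSemicontinuous g) (xs : WeakDual ℝ X) (hxs : xs ∈ subdiff0 g)
  (S : Submodule ℝ X) (hS : (S : Set X) = LxSet g xs)

include hsub hproper hS in
lemma hFn_lift_sound : ∀ (x y : X), (QuotientAddGroup.leftRel S.toAddSubgroup) x y →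
    hFn g xs x = hFn g xs y := by
  intro x y hxy
  rw [QuotientAddGroup.leftRel_apply] at hxy
  have hmem : -x + y ∈ LxSet g xs := by rw [← hS]; exact hxy
  have : y = x + (-x + y) := by abel
  rw [this, hFn_invariant g hsub hproper xs hmem x]

noncomputable def ghFn : X ⧸ S → EReal :=
  fun xh => Quotient.liftOn' xh (hFn g xs) (hFn_lift_sound g hsub hproper xs S hS)

lemma ghFn_mk (x : X) :
    ghFn g hsub hproper xs S hS (Submodule.Quotient.mk x) = hFn g xs x := rfl

end H3

section H4
variable {X : Type*} [AddCommGroup X] [Module ℝ X] [TopologicalSpace X] [IsTopologicalAddGroup X]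
  [ContinuousSMul ℝ X]
  (g : X → EReal) (hsub : SublinearFn g) (hproper : ∀ x, g x ≠ ⊥)
  (hlsc : LowerSemicontinuous g) (xs : WeakDual ℝ X) (hxs : xs ∈ subdiff0 g)
  (S : Submodule ℝ X) (hS : (S : Set X) = LxSet g xs)

include hlsc in
lemma ghFn_lsc : LowerSemicontinuous (ghFn g hsub hproper xs S hS) := by
  rw [lowerSemicontinuous_iff_isOpen_preimage]
  intro c
  have hq : IsQuotientMap (Submodule.Quotient.mk : X → X ⧸ S) :=
    QuotientAddGroup.isQuotientMap_mk S.toAddSubgroup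
  have hpre : (Submodule.Quotient.mk : X → X ⧸ S) ⁻¹' (ghFn g hsub hproper xs S hS ⁻¹' Ioi c)
      = hFn g xs ⁻¹' Ioi c := rfl
  rw [← hq.isOpen_preimage, hpre]
  exact (lowerSemicontinuous_iff_isOpen_preimage.1 (hFn_lsc g hproper hlsc xs)) c

lemma ghFn_ne_bot (xh : X ⧸ S) : ghFn g hsub hproper xs S hS xh ≠ ⊥ := by
  obtain ⟨x, rfl⟩ := Submodule.Quotient.mk_surjective S xh
  rw [ghFn_mk]; exact hFn_ne_bot g hproper xs x

include hxs in
lemma ghFn_nonneg (xh : X ⧸ S) : 0 ≤ ghFn g hsub hproper xs S hS xh := by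
  obtain ⟨x, rfl⟩ := Submodule.Quotient.mk_surjective S xh
  rw [ghFn_mk]; exact hFn_nonneg g hproper xs hxs x

lemma ghFn_zero : ghFn g hsub hproper xs S hS 0 = 0 := by
  have : (0 : X ⧸ S) = Submodule.Quotient.mk 0 := rfl
  rw [this, ghFn_mk]; exact hFn_zero g hsub xs

lemma ghFn_sublinear : SublinearFn (ghFn g hsub hproper xs S hS) := by
  refine ⟨ghFn_zero g hsub hproper xs S hS, ?_, ?_⟩
  · intro xh t ht
    obtain ⟨x, rfl⟩ := Submodule.Quotient.mk_surjective S xh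
    rw [← Submodule.Quotient.mk_smul, ghFn_mk, ghFn_mk]
    exact hFn_smul g hsub hproper xs x t ht
  · intro xh yh
    obtain ⟨x, rfl⟩ := Submodule.Quotient.mk_surjective S xh
    obtain ⟨y, rfl⟩ := Submodule.Quotient.mk_surjective S yh
    rw [← Submodule.Quotient.mk_add, ghFn_mk, ghFn_mk, ghFn_mk]
    exact hFn_add g hsub hproper xs x y

include hxs in
lemma ghFn_zeroset :
    {xh : X ⧸ S | ghFn g hsub hproper xs S hS xh = 0 ∧ ghFn g hsub hproper xs S hS (-xh) = 0}
      = {0} := by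
  ext xh
  obtain ⟨x, rfl⟩ := Submodule.Quotient.mk_surjective S xh
  simp only [mem_setOf_eq, mem_singleton_iff]
  rw [← Submodule.Quotient.mk_neg, ghFn_mk, ghFn_mk, Submodule.Quotient.mk_eq_zero]
  rw [hFn_eq_zero_iff g xs x, ← hS]
  rfl

end H4

section H5
variable {X : Type*} [AddCommGroup X] [Module ℝ X] [TopologicalSpace X] [IsTopologicalAddGroup X]
  [ContinuousSMul ℝ X]
  (g : X → EReal) (hsub : SublinearFn g) (hproper : ∀ x, g x ≠ ⊥)
  (hlsc : LowerSemicontinuous g) (xs : WeakDual ℝ X) (hxs : xs ∈ subdiff0 g)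
  (S : Submodule ℝ X) (hS : (S : Set X) = LxSet g xs)

/-- The annihilator of `S` in the weak dual. -/
def VS (S : Submodule ℝ X) : Submodule ℝ (WeakDual ℝ X) where
  carrier := {z | ∀ l ∈ S, z l = 0}
  add_mem' := by
    intro a b ha hb l hl
    show (a + b) l = 0
    rw [show (a + b) l = a l + b l from rfl, ha l hl, hb l hl, add_zero]
  zero_mem' := by
    intro l hl
    show (0 : X →L[ℝ] ℝ) l = 0
    rw [ContinuousLinearMap.zero_apply]
  smul_mem' := by
    intro c z hz l hl
    show (c • z) l = 0
    rw [show (c • z) l = c • z l from rfl, hz l hl, smul_zero]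

lemma VS_closed : IsClosed ((VS S : Set (WeakDual ℝ X))) := by
  have : (VS S : Set (WeakDual ℝ X)) = ⋂ l ∈ (S : Set X), {z : WeakDual ℝ X | z l = 0} := by
    ext z; simp [VS]
  rw [this]
  exact isClosed_biInter fun l hl =>
    isClosed_eq (WeakDual.eval_continuous l) continuous_const

noncomputable def mkCLM : X →L[ℝ] X ⧸ S :=
  { S.mkQ with cont := (QuotientAddGroup.isQuotientMap_mk S.toAddSubgroup).continuous }

lemma mkCLM_apply (x : X) : mkCLM S x = Submodule.Quotient.mk x := rfl

/-- Pullback of a functional on the quotient. -/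
noncomputable def TW : WeakDual ℝ (X ⧸ S) → WeakDual ℝ X :=
  fun w => ContinuousLinearMap.comp (w : (X ⧸ S) →L[ℝ] ℝ) (mkCLM S)

lemma TW_apply (w : WeakDual ℝ (X ⧸ S)) (x : X) :
    TW S w x = w (Submodule.Quotient.mk x) := rfl

lemma TW_continuous : Continuous (TW S) := by
  apply WeakDual.continuous_of_continuous_eval
  intro x
  exact WeakDual.eval_continuous (Submodule.Quotient.mk x)

lemma TW_injective : Function.Injective (TW S) := by
  intro w w' h
  apply ContinuousLinearMap.ext
  intro xh
  obtain ⟨x, rfl⟩ := Submodule.Quotient.mk_surjective S xh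
  have := congrArg (fun z : WeakDual ℝ X => z x) h
  exact this

lemma TW_mem_VS (w : WeakDual ℝ (X ⧸ S)) : TW S w ∈ VS S := by
  intro l hl
  rw [TW_apply]
  have : (Submodule.Quotient.mk l : X ⧸ S) = 0 := (Submodule.Quotient.mk_eq_zero S).2 hl
  rw [this, map_zero]

/-- Lift of a functional vanishing on `S`. -/
noncomputable def RW (z : WeakDual ℝ X) (hz : z ∈ VS S) : WeakDual ℝ (X ⧸ S) :=
  { S.liftQ (z : X →L[ℝ] ℝ).toLinearMap (by
      intro l hl
      simp only [LinearMap.mem_ker, ContinuousLinearMap.coe_coe]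
      exact hz l hl) with
    cont := by
      refine (QuotientAddGroup.isQuotientMap_mk S.toAddSubgroup).continuous_iff.2 ?_
      have : ∀ x : X, (S.liftQ (z : X →L[ℝ] ℝ).toLinearMap (by
          intro l hl
          simp only [LinearMap.mem_ker, ContinuousLinearMap.coe_coe]
          exact hz l hl)) (Submodule.Quotient.mk x) = z x := fun x => rfl
      exact (ContinuousLinearMap.continuous (z : X →L[ℝ] ℝ)).congr fun x => (this x).symm }

end H5

section H6
variable {X : Type*} [AddCommGroup X] [Module ℝ X] [TopologicalSpace X] [IsTopologicalAddGroup X]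
  [ContinuousSMul ℝ X]
  (g : X → EReal) (hsub : SublinearFn g) (hproper : ∀ x, g x ≠ ⊥)
  (hlsc : LowerSemicontinuous g) (xs : WeakDual ℝ X) (hxs : xs ∈ subdiff0 g)
  (S : Submodule ℝ X) (hS : (S : Set X) = LxSet g xs)

lemma RW_apply (z : WeakDual ℝ X) (hz : z ∈ VS S) (x : X) :
    RW S z hz (Submodule.Quotient.mk x) = z x := rfl

lemma TW_RW (z : WeakDual ℝ X) (hz : z ∈ VS S) : TW S (RW S z hz) = z := by
  apply ContinuousLinearMap.ext
  intro x
  rfl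

lemma RW_TW (w : WeakDual ℝ (X ⧸ S)) : RW S (TW S w) (TW_mem_VS S w) = w := by
  apply ContinuousLinearMap.ext
  intro xh
  obtain ⟨x, rfl⟩ := Submodule.Quotient.mk_surjective S xh
  rfl

lemma RW_continuous : Continuous fun z : (VS S : Set (WeakDual ℝ X)) => RW S z.1 z.2 := by
  apply WeakDual.continuous_of_continuous_eval
  intro xh
  obtain ⟨x, rfl⟩ := Submodule.Quotient.mk_surjective S xh
  have : (fun z : (VS S : Set (WeakDual ℝ X)) => RW S z.1 z.2 (Submodule.Quotient.mk x))
      = fun z => z.1 x := rfl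
  rw [this]
  exact (WeakDual.eval_continuous x).comp continuous_subtype_val

include hsub hproper hS in
/-- `T` maps the cone in the quotient dual onto the cone in the original dual. -/
lemma TW_image_cone :
    TW S '' coneGen (subdiff0 (ghFn g hsub hproper xs S hS)) 0 = coneGen (subdiff0 g) xs := by
  ext q
  constructor
  · rintro ⟨p, ⟨t, ht, w, hw, rfl⟩, rfl⟩
    refine ⟨t, ht, TW S w + xs, ?_, ?_⟩
    · intro x
      have h1 : ((w (Submodule.Quotient.mk x) : ℝ) : EReal)
          ≤ ghFn g hsub hproper xs S hS (Submodule.Quotient.mk x) := hw _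
      rw [ghFn_mk] at h1
      have h2 : ((w (Submodule.Quotient.mk x) : ℝ) : EReal) + ((xs x : ℝ) : EReal) ≤ g x :=
        EReal.add_le_of_le_sub h1
      have h3 : ((TW S w + xs) x : EReal) = ((w (Submodule.Quotient.mk x) : ℝ) : EReal) + ((xs x : ℝ) : EReal) := by
        rw [show (TW S w + xs) x = TW S w x + xs x from rfl, TW_apply, EReal.coe_add]
      rw [h3]; exact h2
    · rw [add_sub_cancel_right, sub_zero]
      show TW S (t • w) = t • TW S w
      apply ContinuousLinearMap.ext
      intro x
      rfl
  · rintro ⟨t, ht, y, hy, rfl⟩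
    have hyv : y - xs ∈ VS S := by
      intro l hl
      have hlL : l ∈ LxSet g xs := by rw [← hS]; exact hl
      have hnegl : (-l) ∈ LxSet g xs := by
        refine ⟨?_, ?_⟩
        · rw [map_neg]; exact hlL.2
        · rw [neg_neg, map_neg, neg_neg]; exact hlL.1
      have h1 : ((y l : ℝ) : EReal) ≤ (xs l : EReal) := by
        have := hy l; rw [hlL.1] at this; exact this
      have h2 : ((y (-l) : ℝ) : EReal) ≤ ((xs (-l) : ℝ) : EReal) := by
        have := hy (-l); rw [hnegl.1] at this; exact this
      have h1' : y l ≤ xs l := by exact_mod_cast h1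
      have h2' : y (-l) ≤ xs (-l) := by exact_mod_cast h2
      rw [map_neg, map_neg] at h2'
      have : y l = xs l := le_antisymm h1' (by linarith)
      rw [show (y - xs) l = y l - xs l from rfl, this, sub_self]
    refine ⟨t • RW S (y - xs) hyv, ⟨t, ht, RW S (y - xs) hyv, ?_, by rw [sub_zero]⟩, ?_⟩
    · intro xh
      obtain ⟨x, rfl⟩ := Submodule.Quotient.mk_surjective S xh
      rw [RW_apply, ghFn_mk]
      show (((y - xs) x : ℝ) : EReal) ≤ g x - ((xs x : ℝ) : EReal)
      rw [show (y - xs) x = y x - xs x from rfl, EReal.coe_sub]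
      exact EReal.sub_le_sub (hy x) le_rfl
    · apply ContinuousLinearMap.ext
      intro x
      rfl

include hsub hproper hS in
lemma cone_sub_VS : coneGen (subdiff0 g) xs ⊆ (VS S : Set (WeakDual ℝ X)) := by
  rw [← TW_image_cone g hsub hproper xs S hS]
  rintro q ⟨p, _, rfl⟩
  exact TW_mem_VS S p

end H6

section H7
variable {X : Type*} [AddCommGroup X] [Module ℝ X] [TopologicalSpace X] [IsTopologicalAddGroup X]
  [ContinuousSMul ℝ X]
  (g : X → EReal) (hsub : SublinearFn g) (hproper : ∀ x, g x ≠ ⊥)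
  (hlsc : LowerSemicontinuous g) (xs : WeakDual ℝ X) (hxs : xs ∈ subdiff0 g)

include hsub hproper in
lemma closure_cone_transfer (S : Submodule ℝ X) (hS : (S : Set X) = LxSet g xs) :
    closure (coneGen (subdiff0 (ghFn g hsub hproper xs S hS)) 0) = univ ↔
      closure (coneGen (subdiff0 g) xs) = (VS S : Set (WeakDual ℝ X)) := by
  set CQ := coneGen (subdiff0 (ghFn g hsub hproper xs S hS)) 0 with hCQ
  set CX := coneGen (subdiff0 g) xs with hCX
  have himg : TW S '' CQ = CX := TW_image_cone g hsub hproper xs S hS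
  have hsubV : CX ⊆ (VS S : Set (WeakDual ℝ X)) := cone_sub_VS g hsub hproper xs S hS
  constructor
  · intro huniv
    refine le_antisymm (closure_minimal hsubV (VS_closed S)) ?_
    intro z hz
    rw [mem_closure_iff]
    intro U hU hzU
    have hw : RW S z hz ∈ closure CQ := by rw [huniv]; trivial
    have hpre : IsOpen (TW S ⁻¹' U) := hU.preimage (TW_continuous S)
    have hwm : RW S z hz ∈ TW S ⁻¹' U := by
      simp only [mem_preimage, TW_RW S z hz]; exact hzU
    obtain ⟨q, hq1, hq2⟩ := (mem_closure_iff.1 hw) _ hpre hwm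
    exact ⟨TW S q, hq1, himg ▸ ⟨q, hq2, rfl⟩⟩
  · intro hVS
    rw [eq_univ_iff_forall]
    intro w
    rw [mem_closure_iff]
    intro U hU hwU
    have hRcont := RW_continuous S
    have hU' : IsOpen ((fun zz : (VS S : Set (WeakDual ℝ X)) => RW S zz.1 zz.2) ⁻¹' U) :=
      hU.preimage hRcont
    obtain ⟨V, hV, hVeq⟩ := isOpen_induced_iff.1 hU'
    have hTWw : TW S w ∈ (VS S : Set (WeakDual ℝ X)) := TW_mem_VS S w
    have hTWwV : TW S w ∈ V := by
      have : (⟨TW S w, hTWw⟩ : (VS S : Set (WeakDual ℝ X))) ∈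
          (fun zz : (VS S : Set (WeakDual ℝ X)) => RW S zz.1 zz.2) ⁻¹' U := by
        simp only [mem_preimage, RW_TW S w]; exact hwU
      rw [← hVeq] at this
      exact this
    have hclos : TW S w ∈ closure CX := by rw [hVS]; exact hTWw
    obtain ⟨c, hc1, hc2⟩ := (mem_closure_iff.1 hclos) V hV hTWwV
    have hcV : c ∈ (VS S : Set (WeakDual ℝ X)) := hsubV hc2
    obtain ⟨q, hq, hqc⟩ : ∃ q ∈ CQ, TW S q = c := by
      have := himg ▸ hc2
      obtain ⟨q, hq, rfl⟩ := this
      exact ⟨q, hq, rfl⟩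
    refine ⟨RW S c hcV, ?_, ?_⟩
    · have : (⟨c, hcV⟩ : (VS S : Set (WeakDual ℝ X))) ∈ Subtype.val ⁻¹' V := hc1
      rw [hVeq] at this
      exact this
    · subst hqc
      rw [RW_TW S q]
      exact hq

end H7

section Support
variable {X : Type*} [AddCommGroup X] [Module ℝ X] [TopologicalSpace X] [IsTopologicalAddGroup X]
  [ContinuousSMul ℝ X] [LocallyConvexSpace ℝ X]

lemma aux_support (g : X → EReal) (hsub : SublinearFn g) (hproper : ∀ x, g x ≠ ⊥)
    (hlsc : LowerSemicontinuous g) (xs : WeakDual ℝ X) (hxs : xs ∈ subdiff0 g)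
    {x₀ : X} {r : ℝ} (hr : (r : EReal) < g x₀) :
    ∃ y : WeakDual ℝ X, y ∈ subdiff0 g ∧ r < y x₀ := by
  obtain ⟨hg0, hghom, hgadd⟩ := hsub
  set Epi : Set (X × ℝ) := {p | g p.1 ≤ (p.2 : EReal)} with hEpi
  -- Epi is a cone: closed under positive scalar multiplication
  have hcone : ∀ p ∈ Epi, ∀ t : ℝ, 0 < t → t • p ∈ Epi := by
    rintro ⟨x, s⟩ hp t ht
    show g (t • x) ≤ ((t * s : ℝ) : EReal)
    rw [hghom x t ht, EReal.coe_mul]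
    exact mul_le_mul_of_nonneg_left hp (by exact_mod_cast ht.le)
  -- Epi is convex
  have hconv : Convex ℝ Epi := by
    rintro ⟨x, s⟩ hp ⟨x', s'⟩ hq a b ha hb hab
    rcases eq_or_lt_of_le ha with rfl | ha'
    · simp only [zero_add] at hab; subst hab
      simpa using hq
    rcases eq_or_lt_of_le hb with rfl | hb'
    · simp only [add_zero] at hab; subst hab
      simpa using hp
    have hp' : g x ≤ (s : EReal) := hp
    have hq' : g x' ≤ (s' : EReal) := hq
    show g (a • x + b • x') ≤ ((a * s + b * s' : ℝ) : EReal)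
    calc g (a • x + b • x') ≤ g (a • x) + g (b • x') := hgadd _ _
    _ = (a : EReal) * g x + (b : EReal) * g x' := by rw [hghom x a ha', hghom x' b hb']
    _ ≤ (a : EReal) * s + (b : EReal) * s' :=
        add_le_add (mul_le_mul_of_nonneg_left hp' (by exact_mod_cast ha))
          (mul_le_mul_of_nonneg_left hq' (by exact_mod_cast hb))
    _ = ((a * s + b * s' : ℝ) : EReal) := by push_cast; rfl
  -- Epi is closed
  have hclosed : IsClosed Epi := by
    rw [← isOpen_compl_iff, isOpen_iff_mem_nhds]
    rintro ⟨x, s⟩ hp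
    simp only [mem_compl_iff, hEpi, mem_setOf_eq, not_le] at hp
    obtain ⟨m, hm1, hm2⟩ := EReal.exists_between_coe_real hp
    have : {q : X × ℝ | (m : EReal) < g q.1} ∩ {q | q.2 < m} ∈ nhds (x, s) := by
      refine Filter.inter_mem ?_ ?_
      · exact ((hlsc.isOpen_preimage m).preimage continuous_fst).mem_nhds hm2
      · exact (isOpen_lt continuous_snd continuous_const).mem_nhds (by exact_mod_cast hm1)
    refine Filter.mem_of_superset this ?_
    rintro ⟨x', s'⟩ ⟨h1, h2⟩
    simp only [mem_compl_iff, hEpi, mem_setOf_eq, not_le]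
    calc ((s' : ℝ) : EReal) < (m : EReal) := by exact_mod_cast h2
    _ < g x' := h1
  -- the point to separate
  have hnotmem : (x₀, r) ∉ Epi := by
    simp only [hEpi, mem_setOf_eq, not_le]; exact hr
  obtain ⟨f, u, hfu, huf⟩ := geometric_hahn_banach_closed_point hconv hclosed hnotmem
  -- u > 0
  have h0Epi : ((0 : X), (0 : ℝ)) ∈ Epi := by
    simp only [hEpi, mem_setOf_eq, hg0]; norm_num
  have hu0 : 0 < u := by
    have := hfu _ h0Epi
    rwa [show ((0:X),(0:ℝ)) = (0 : X × ℝ) from rfl, map_zero] at this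
  -- f ≤ 0 on Epi
  have hfle : ∀ p ∈ Epi, f p ≤ 0 := by
    intro p hp
    by_contra hpos
    push_neg at hpos
    set t : ℝ := (u + 1) / f p with htdef
    have ht : 0 < t := div_pos (by linarith) hpos
    have := hfu _ (hcone p hp t ht)
    rw [map_smul, smul_eq_mul] at this
    rw [htdef] at this
    field_simp at this
    linarith
  -- decompose f
  set φ : X →L[ℝ] ℝ := f.comp (ContinuousLinearMap.inl ℝ X ℝ) with hφ
  set c : ℝ := f (0, 1) with hc
  have hdecomp : ∀ x : X, ∀ t : ℝ, f (x, t) = φ x + t * c := by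
    intro x t
    have : (x, t) = (x, (0:ℝ)) + t • ((0:X), (1:ℝ)) := by
      simp [Prod.ext_iff]
    rw [this, map_add, map_smul, smul_eq_mul]
    rfl
  have hc0 : c ≤ 0 := by
    have : ((0 : X), (1 : ℝ)) ∈ Epi := by
      simp only [hEpi, mem_setOf_eq, hg0]; norm_num
    simpa [hc] using hfle _ this
  have hfx₀ : u < φ x₀ + r * c := by
    have := huf; rwa [hdecomp x₀ r] at this
  -- key: for x with g x ≠ ⊤, φ x + a * c ≤ 0 for the real value a of g x
  have hkey : ∀ x : X, g x ≠ ⊤ → φ x + (g x).toReal * c ≤ 0 := by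
    intro x hx
    have hmem : (x, (g x).toReal) ∈ Epi := by
      simp only [hEpi, mem_setOf_eq]
      rw [EReal.coe_toReal hx (hproper x)]
    have := hfle _ hmem
    rwa [hdecomp] at this
  rcases lt_or_eq_of_le hc0 with hcneg | hczero
  · -- c < 0
    refine ⟨(-c)⁻¹ • φ, ?_, ?_⟩
    · intro x
      by_cases hx : g x = ⊤
      · rw [hx]; exact le_top
      · have h1 := hkey x hx
        have h2 : ((-c)⁻¹ • φ) x ≤ (g x).toReal := by
          rw [ContinuousLinearMap.smul_apply, smul_eq_mul]
          rw [inv_mul_le_iff₀ (by linarith)]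
          nlinarith
        calc ((((-c)⁻¹ • φ) x : ℝ) : EReal) ≤ (((g x).toReal : ℝ) : EReal) := by exact_mod_cast h2
        _ = g x := EReal.coe_toReal hx (hproper x)
    · show r < (-c)⁻¹ * φ x₀
      rw [lt_inv_mul_iff₀ (by linarith)]
      nlinarith
  · -- c = 0
    have hφx₀ : u < φ x₀ := by rw [hczero] at hfx₀; linarith
    set t : ℝ := max 0 ((r - xs x₀) / φ x₀) + 1 with htdef
    have ht : 0 < t := by positivity
    set φ' : WeakDual ℝ X := φ with hφ'
    have happ : ∀ x : X, (xs + t • φ') x = xs x + t * φ x := fun _ => rfl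
    refine ⟨xs + t • φ', ?_, ?_⟩
    · intro x
      by_cases hx : g x = ⊤
      · rw [hx]; exact le_top
      · have h1 := hkey x hx
        rw [hczero, mul_zero, add_zero] at h1
        have h2 : (xs + t • φ') x ≤ xs x := by
          rw [happ x]; nlinarith
        calc (((xs + t • φ') x : ℝ) : EReal) ≤ ((xs x : ℝ) : EReal) := by exact_mod_cast h2
        _ ≤ g x := hxs x
    · rw [happ x₀]
      have h3 : (r - xs x₀) / φ x₀ < t := by
        rw [htdef]
        have := le_max_right 0 ((r - xs x₀) / φ x₀)
        linarith
      have h4 : r - xs x₀ < t * φ x₀ := by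
        rw [div_lt_iff₀ (by linarith)] at h3
        linarith
      linarith
end Support

section Eval
variable {Y : Type*} [AddCommGroup Y] [Module ℝ Y] [TopologicalSpace Y]

/-- Evaluation at a point as a linear map on the weak dual. -/
def evalLin (y : Y) : WeakDual ℝ Y →ₗ[ℝ] ℝ where
  toFun z := z y
  map_add' a b := rfl
  map_smul' c a := rfl

lemma aux_eval (f : WeakDual ℝ Y →L[ℝ] ℝ) : ∃ x : Y, ∀ z : WeakDual ℝ Y, f z = z x := by
  have hb : f ⁻¹' (Metric.ball (0:ℝ) 1) ∈ nhds (0 : WeakDual ℝ Y) := by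
    refine f.continuous.continuousAt.preimage_mem_nhds ?_
    rw [map_zero]
    exact Metric.ball_mem_nhds _ one_pos
  change f ⁻¹' _ ∈ @nhds _ (TopologicalSpace.induced (fun (z : WeakDual ℝ Y) (y : Y) => z y) Pi.topologicalSpace) 0 at hb
  rw [nhds_induced (fun (z : WeakDual ℝ Y) (y : Y) => z y) 0] at hb
  obtain ⟨U, hU, hUsub⟩ := Filter.mem_comap.1 hb
  rw [nhds_pi] at hU
  obtain ⟨I, hIfin, V, hV, hprod⟩ := Filter.mem_pi.1 hU
  -- kernel inclusion
  have hker : ∀ z : WeakDual ℝ Y, (∀ y ∈ I, z y = 0) → f z = 0 := by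
    intro z hz
    by_contra hfz
    obtain ⟨n, hn⟩ := exists_nat_gt (1 / |f z|)
    have habs : 0 < |f z| := abs_pos.2 hfz
    have hmem : ((n : ℝ) • z) ∈ f ⁻¹' (Metric.ball (0:ℝ) 1) := by
      apply hUsub
      refine mem_preimage.2 (hprod ?_)
      intro y hy
      have : ((n : ℝ) • z) y = (n : ℝ) * z y := rfl
      show ((n : ℝ) • z) y ∈ V y
      rw [this, hz y hy, mul_zero]
      exact mem_of_mem_nhds (hV y)
    rw [mem_preimage, Metric.mem_ball, Real.dist_eq, sub_zero, map_smul, smul_eq_mul,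
      abs_mul, Nat.abs_cast] at hmem
    rw [div_lt_iff₀ habs] at hn
    have hn' : (n : ℝ) * |f z| < 1 := hmem
    linarith
  -- linear algebra: f is in the span of the evaluations at points of I
  have : Finite ↥I := hIfin.to_subtype
  have hspan : (f : WeakDual ℝ Y →ₗ[ℝ] ℝ) ∈
      Submodule.span ℝ (Set.range fun y : ↥I => evalLin (y : Y)) := by
    apply mem_span_of_iInf_ker_le_ker
    intro z hz
    simp only [Submodule.mem_iInf, LinearMap.mem_ker] at hz
    simp only [LinearMap.mem_ker, ContinuousLinearMap.coe_coe]
    exact hker z fun y hy => hz ⟨y, hy⟩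
  have : Fintype ↥I := hIfin.fintype
  obtain ⟨c, hc⟩ := (Submodule.mem_span_range_iff_exists_fun ℝ).1 hspan
  refine ⟨∑ i : ↥I, c i • (i : Y), ?_⟩
  intro z
  have h1 : f z = (∑ i : ↥I, c i • evalLin (i : Y)) z := by
    rw [hc]; rfl
  rw [h1, LinearMap.sum_apply]
  rw [map_sum]
  congr 1
  ext i
  rw [LinearMap.smul_apply, map_smul]
  rfl
end Eval

instance weakDual_locallyConvex {Y : Type*} [AddCommGroup Y] [Module ℝ Y] [TopologicalSpace Y] :
    LocallyConvexSpace ℝ (WeakDual ℝ Y) :=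
  WeakBilin.locallyConvexSpace

section H8
variable {X : Type*} [AddCommGroup X] [Module ℝ X] [TopologicalSpace X] [IsTopologicalAddGroup X]
  [ContinuousSMul ℝ X] [LocallyConvexSpace ℝ X]
  (g : X → EReal) (hsub : SublinearFn g) (hproper : ∀ x, g x ≠ ⊥)
  (hlsc : LowerSemicontinuous g) (xs : WeakDual ℝ X) (hxs : xs ∈ subdiff0 g)
  (S : Submodule ℝ X) (hS : (S : Set X) = LxSet g xs)

include hsub hproper hlsc hxs hS in
lemma closure_cone_eq_VS (Sub : Submodule ℝ (WeakDual ℝ X))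
    (hcl : closure (coneGen (subdiff0 g) xs) = (Sub : Set (WeakDual ℝ X))) :
    closure (coneGen (subdiff0 g) xs) = (VS S : Set (WeakDual ℝ X)) := by
  set CX := coneGen (subdiff0 g) xs with hCX
  have hsubV : CX ⊆ (VS S : Set (WeakDual ℝ X)) := cone_sub_VS g hsub hproper xs S hS
  have hSubV : (Sub : Set (WeakDual ℝ X)) ⊆ (VS S : Set (WeakDual ℝ X)) := by
    rw [← hcl]; exact closure_minimal hsubV (VS_closed S)
  rw [hcl]
  refine le_antisymm hSubV ?_
  intro z hz
  by_contra hznot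
  -- separate z from Sub
  obtain ⟨F, u, hFu, huF⟩ :=
    geometric_hahn_banach_closed_point (Submodule.convex Sub) (hcl ▸ isClosed_closure) hznot
  obtain ⟨x₀, hx₀⟩ := aux_eval F
  -- F vanishes on Sub
  have hvanish : ∀ a ∈ Sub, a x₀ = 0 := by
    intro a ha
    by_contra hne
    set t : ℝ := (|u| + 1) / a x₀ with htdef
    have hmem : t • a ∈ Sub := Submodule.smul_mem Sub t ha
    have := hFu _ hmem
    rw [hx₀] at this
    have happ : (t • a) x₀ = t * a x₀ := rfl
    rw [happ, htdef, div_mul_cancel₀ _ hne] at this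
    linarith [le_abs_self u]
  have hu0 : 0 < u := by
    have := hFu 0 (Submodule.zero_mem Sub)
    rwa [map_zero] at this
  have hzx₀ : u < z x₀ := by rw [← hx₀]; exact huF
  -- every y ∈ ∂g(0) satisfies y x₀ = xs x₀
  have hyx₀ : ∀ y ∈ subdiff0 g, y x₀ = xs x₀ := by
    intro y hy
    have hmem : y - xs ∈ CX := ⟨1, zero_le_one, y, hy, by rw [one_smul]⟩
    have : y - xs ∈ (Sub : Set (WeakDual ℝ X)) := by
      rw [← hcl]; exact subset_closure hmem
    have h0 := hvanish _ this
    have happ : (y - xs) x₀ = y x₀ - xs x₀ := rfl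
    rw [happ] at h0
    linarith
  -- conclude x₀ ∈ S, contradiction with z x₀ > u > 0
  have hgx₀ : g x₀ = ((xs x₀ : ℝ) : EReal) := by
    refine le_antisymm ?_ (hxs x₀)
    by_contra hlt
    push_neg at hlt
    obtain ⟨y, hy, hyr⟩ := aux_support g ⟨hsub.1, hsub.2.1, hsub.2.2⟩ hproper hlsc xs hxs hlt
    have := hyx₀ y hy
    linarith
  have hgnx₀ : g (-x₀) = ((xs (-x₀) : ℝ) : EReal) := by
    refine le_antisymm ?_ (hxs (-x₀))
    by_contra hlt
    push_neg at hlt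
    obtain ⟨y, hy, hyr⟩ := aux_support g ⟨hsub.1, hsub.2.1, hsub.2.2⟩ hproper hlsc xs hxs hlt
    have h1 := hyx₀ y hy
    rw [map_neg, map_neg] at hyr
    linarith
  have hx₀S : x₀ ∈ S := by
    rw [← SetLike.mem_coe, hS]
    refine ⟨hgx₀, ?_⟩
    rw [hgnx₀, map_neg]
  have := hz x₀ hx₀S
  linarith

end H8

variable {X : Type*}

theorem stmt9 [AddCommGroup X] [Module ℝ X] [TopologicalSpace X] [IsTopologicalAddGroup X]
    [ContinuousSMul ℝ X] [LocallyConvexSpace ℝ X] [T2Space X]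
    (g : X → EReal) (hsub : SublinearFn g) (hproper : ∀ x, g x ≠ ⊥)
    (hlsc : LowerSemicontinuous g) (xs : WeakDual ℝ X) (hxs : xs ∈ subdiff0 g)
    (S : Submodule ℝ X) (hS : (S : Set X) = LxSet g xs) :
    ∃ gh : (X ⧸ S) → EReal,
      (∀ x : X, gh (Submodule.Quotient.mk x) = g x - ((xs x : ℝ) : EReal)) ∧
      (∀ xh, gh xh ≠ ⊥) ∧ (∃ xh, gh xh ≠ ⊤) ∧
      LowerSemicontinuous gh ∧ SublinearFn gh ∧ (∀ xh, 0 ≤ gh xh) ∧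
      {xh : X ⧸ S | gh xh = 0 ∧ gh (-xh) = 0} = {0} ∧
      (xs ∈ qri (subdiff0 g) ↔ (0 : WeakDual ℝ (X ⧸ S)) ∈ qi (subdiff0 gh)) := by
  
  classical
  refine ⟨ghFn g hsub hproper xs S hS, fun x => rfl,
    ghFn_ne_bot g hsub hproper xs S hS,
    ⟨0, by rw [ghFn_zero g hsub hproper xs S hS]; simp⟩,
    ghFn_lsc g hsub hproper hlsc xs S hS,
    ghFn_sublinear g hsub hproper xs S hS,
    ghFn_nonneg g hsub hproper xs hxs S hS,
    ghFn_zeroset g hsub hproper xs hxs S hS, ?_⟩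
  constructor
  · rintro ⟨_, Sub, hcl⟩
    refine ⟨?_, ?_⟩
    · intro xh
      have h0 : (((0 : WeakDual ℝ (X ⧸ S)) xh : ℝ) : EReal) = (0 : EReal) := by
        norm_cast
      rw [h0]
      exact ghFn_nonneg g hsub hproper xs hxs S hS xh
    · have hsz : ∀ q ∈ coneGen (subdiff0 (ghFn g hsub hproper xs S hS)) 0, q - 0 = q := by
        intro q _; rw [sub_zero]
      have : closure (coneGen (subdiff0 g) xs) = (VS S : Set (WeakDual ℝ X)) :=
        closure_cone_eq_VS g hsub hproper hlsc xs hxs S hS Sub hcl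
      exact (closure_cone_transfer g hsub hproper xs S hS).2 this
  · rintro ⟨_, hclQ⟩
    exact ⟨hxs, VS S, (closure_cone_transfer g hsub hproper xs S hS).1 hclQ⟩
end
end

section
/- Let X := ℓ₂ (real square-summable sequences) with its usual norm ‖·‖₂, fix q ∈ (2, ∞), and define g : ℓ₂ → ℝ by g(x) := (Σ_{n≥1} |x_n|^q)^{1/q} = ‖x‖_q. Then g is a finite-valued continuous sublinear function satisfying g(x) ≤ ‖x‖₂ for all x and {x ∈ ℓ₂ : g(x) ≤ 0} = {0}, yet there exists no α > 0 such that g(x) ≥ α‖x‖₂ for all x ∈ ℓ₂. -/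
noncomputable section

/-- The `ℓ_q`-"norm" of an element of `ℓ₂` (finite for `q ≥ 2`). -/
def lqNorm (q : ℝ) (x : lp (fun _ : ℕ => ℝ) 2) : ℝ :=
  (∑' n : ℕ, |x n| ^ q) ^ (1 / q)

theorem stmt11 (q : ℝ) (hq : 2 < q) :
    Continuous (lqNorm q) ∧
    lqNorm q 0 = 0 ∧
    (∀ (x : lp (fun _ : ℕ => ℝ) 2) (t : ℝ), 0 < t → lqNorm q (t • x) = t * lqNorm q x) ∧
    (∀ x y : lp (fun _ : ℕ => ℝ) 2, lqNorm q (x + y) ≤ lqNorm q x + lqNorm q y) ∧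
    (∀ x : lp (fun _ : ℕ => ℝ) 2, lqNorm q x ≤ ‖x‖) ∧
    {x : lp (fun _ : ℕ => ℝ) 2 | lqNorm q x ≤ 0} = {0} ∧
    ¬ ∃ α : ℝ, 0 < α ∧ ∀ x : lp (fun _ : ℕ => ℝ) 2, α * ‖x‖ ≤ lqNorm q x := by
  have hq0 : (0:ℝ) < q := by linarith
  set p : ENNReal := ENNReal.ofReal q with hpdef
  have hpt : p.toReal = q := ENNReal.toReal_ofReal hq0.le
  have hptpos : 0 < p.toReal := by rw [hpt]; exact hq0
  have h2p : (2:ENNReal) ≤ p := by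
    rw [hpdef, show ((2:ENNReal)) = ENNReal.ofReal 2 by simp]
    exact ENNReal.ofReal_le_ofReal hq.le
  haveI : Fact (1 ≤ p) := ⟨le_trans (by norm_num) h2p⟩
  have hmem : ∀ x : lp (fun _ : ℕ => ℝ) 2, Memℓp (⇑x) p :=
    fun x => (lp.memℓp x).of_exponent_ge h2p
  let ι : lp (fun _ : ℕ => ℝ) 2 → lp (fun _ : ℕ => ℝ) p := fun x => ⟨⇑x, hmem x⟩
  have hιapp : ∀ (x : lp (fun _ : ℕ => ℝ) 2) (n : ℕ), (ι x) n = x n := fun _ _ => rfl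
  have hnorm : ∀ x, lqNorm q x = ‖ι x‖ := by
    intro x
    rw [lp.norm_eq_tsum_rpow hptpos (ι x)]
    simp only [lqNorm, hpt, hιapp, Real.norm_eq_abs]
  -- the bound by the ℓ² norm
  have hle : ∀ x : lp (fun _ : ℕ => ℝ) 2, lqNorm q x ≤ ‖x‖ := by
    intro x
    rw [hnorm]
    refine lp.norm_le_of_tsum_le hptpos (norm_nonneg x) ?_
    have hx2 : ‖x‖ ^ (2:ℝ) = ∑' n, ‖x n‖ ^ (2:ℝ) := by
      have := lp.norm_rpow_eq_tsum (p := 2) (by norm_num) x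
      simpa using this
    have hbound : ∀ n, ‖(ι x) n‖ ^ p.toReal ≤ ‖x n‖ ^ (2:ℝ) * ‖x‖ ^ (q - 2) := by
      intro n
      rw [hιapp, hpt]
      have h1 : ‖x n‖ ≤ ‖x‖ := lp.norm_apply_le_norm two_ne_zero x n
      calc ‖x n‖ ^ q = ‖x n‖ ^ (2:ℝ) * ‖x n‖ ^ (q - 2) := by
            rw [← Real.rpow_add_of_nonneg (norm_nonneg _) (by norm_num : (0:ℝ) ≤ 2)
              (by linarith : (0:ℝ) ≤ q - 2)]
            norm_num
        _ ≤ ‖x n‖ ^ (2:ℝ) * ‖x‖ ^ (q - 2) := by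
            exact mul_le_mul_of_nonneg_left
              (Real.rpow_le_rpow (norm_nonneg _) h1 (by linarith))
              (Real.rpow_nonneg (norm_nonneg _) _)
    have hsum1 : Summable fun n => ‖(ι x) n‖ ^ p.toReal := (hmem x).summable hptpos
    have hsum2 : Summable fun n => ‖x n‖ ^ (2:ℝ) * ‖x‖ ^ (q - 2) := by
      have : Summable fun n => ‖x n‖ ^ (2:ℝ) := by
        have := (lp.memℓp x).summable (p := 2) (by norm_num)
        simpa using this
      exact this.mul_right _
    calc ∑' n, ‖(ι x) n‖ ^ p.toReal ≤ ∑' n, ‖x n‖ ^ (2:ℝ) * ‖x‖ ^ (q - 2) :=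
          Summable.tsum_le_tsum hbound hsum1 hsum2
      _ = (∑' n, ‖x n‖ ^ (2:ℝ)) * ‖x‖ ^ (q - 2) := tsum_mul_right
      _ = ‖x‖ ^ (2:ℝ) * ‖x‖ ^ (q - 2) := by rw [hx2]
      _ = ‖x‖ ^ p.toReal := by
          rw [← Real.rpow_add_of_nonneg (norm_nonneg _) (by norm_num : (0:ℝ) ≤ 2)
            (by linarith : (0:ℝ) ≤ q - 2), hpt]
          norm_num
  -- subadditivity
  have hιadd : ∀ x y, ι (x + y) = ι x + ι y := by
    intro x y
    apply lp.ext
    simp only [ι, lp.coeFn_add]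
  have hsub : ∀ x y : lp (fun _ : ℕ => ℝ) 2,
      lqNorm q (x + y) ≤ lqNorm q x + lqNorm q y := by
    intro x y
    rw [hnorm, hnorm, hnorm, hιadd]
    exact norm_add_le _ _
  have hιsmul : ∀ (t : ℝ) x, ι (t • x) = t • ι x := by
    intro t x
    apply lp.ext
    simp only [ι, lp.coeFn_smul]
  refine ⟨?_, ?_, ?_, hsub, hle, ?_, ?_⟩
  · -- continuity (1-Lipschitz)
    have : LipschitzWith 1 (lqNorm q) := by
      refine LipschitzWith.of_dist_le_mul fun x y => ?_
      rw [NNReal.coe_one, one_mul, Real.dist_eq, dist_eq_norm, abs_sub_le_iff]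
      have key : ∀ a b : lp (fun _ : ℕ => ℝ) 2,
          lqNorm q a - lqNorm q b ≤ ‖a - b‖ := by
        intro a b
        have h1 : lqNorm q a ≤ lqNorm q (a - b) + lqNorm q b := by
          have := hsub (a - b) b
          simpa using this
        have h2 : lqNorm q (a - b) ≤ ‖a - b‖ := hle _
        linarith
      refine ⟨key x y, ?_⟩
      have := key y x
      rwa [← norm_neg, neg_sub] at this
    exact this.continuous
  · simp [lqNorm, Real.zero_rpow hq0.ne', lp.coeFn_zero,
      Real.zero_rpow (inv_ne_zero hq0.ne')]
  · intro x t ht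
    rw [hnorm, hnorm, hιsmul, norm_smul, Real.norm_eq_abs, abs_of_pos ht]
  · -- zero set
    ext x
    simp only [Set.mem_setOf_eq, Set.mem_singleton_iff]
    constructor
    · intro h
      rw [hnorm] at h
      have : ‖ι x‖ = 0 := le_antisymm h (norm_nonneg _)
      have hx0 : ι x = 0 := norm_eq_zero.mp this
      have hcoe : ⇑x = 0 := (lp.eq_zero_iff_coeFn_eq_zero (f := ι x)).mp hx0
      exact lp.eq_zero_iff_coeFn_eq_zero.mpr hcoe
    · rintro rfl
      simp [lqNorm, Real.zero_rpow hq0.ne', lp.coeFn_zero,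
        Real.zero_rpow (inv_ne_zero hq0.ne')]
  · -- no lower bound
    rintro ⟨α, hα, hbound⟩
    set c : ℝ := 1/2 - 1/q with hc
    have hcpos : 0 < c := by
      rw [hc]
      have : 1/q < 1/2 := by
        apply one_div_lt_one_div_of_lt <;> linarith
      linarith
    -- choose N with N^c > 1/α
    obtain ⟨N, hN⟩ := (((tendsto_rpow_atTop hcpos).comp
      tendsto_natCast_atTop_atTop).eventually_gt_atTop (1/α)).and
        (Filter.eventually_ge_atTop 1) |>.exists
    obtain ⟨hNc, hN1⟩ := hN
    have hNpos : (0:ℝ) < (N:ℝ) := by exact_mod_cast hN1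
    -- the element with N ones
    set f : ℕ → ℝ := fun n => if n < N then 1 else 0 with hfdef
    have hfin : (Function.support f).Finite := by
      apply Set.Finite.subset (Set.finite_Iio N)
      intro n hn
      simp only [Function.mem_support, hfdef] at hn
      by_contra h
      simp only [Set.mem_Iio, not_lt] at h
      exact hn (if_neg (not_lt.mpr h))
    have hmf : Memℓp f 2 := (memℓp_zero hfin).of_exponent_ge zero_le
    set x : lp (fun _ : ℕ => ℝ) 2 := ⟨f, hmf⟩ with hxdef
    have hxapp : ∀ n, x n = f n := fun _ => rfl
    -- ∑ over the support for a general exponent r > 0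
    have htsum : ∀ r : ℝ, 0 < r → ∑' n, |x n| ^ r = (N:ℝ) := by
      intro r hr
      have h1 : ∀ n ∉ Finset.range N, |x n| ^ r = 0 := by
        intro n hn
        simp only [Finset.mem_range, not_lt] at hn
        rw [hxapp, hfdef]
        simp [if_neg (not_lt.mpr hn), Real.zero_rpow hr.ne']
      rw [tsum_eq_sum h1]
      have : ∀ n ∈ Finset.range N, |x n| ^ r = 1 := by
        intro n hn
        simp only [Finset.mem_range] at hn
        rw [hxapp, hfdef]
        simp [if_pos hn]
      rw [Finset.sum_congr rfl this]
      simp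
    -- norm of x
    have hxnorm : ‖x‖ = (N:ℝ) ^ ((1:ℝ)/2) := by
      rw [lp.norm_eq_tsum_rpow (by norm_num) x]
      have : (∑' n, ‖x n‖ ^ (2:ENNReal).toReal) = (N:ℝ) := by
        have := htsum 2 (by norm_num)
        simpa [Real.norm_eq_abs] using this
      rw [this]
      norm_num
    have hxlq : lqNorm q x = (N:ℝ) ^ (1/q) := by
      rw [lqNorm, htsum q hq0]
    have := hbound x
    rw [hxnorm, hxlq] at this
    -- derive contradiction: α * N^(1/2) ≤ N^(1/q) means α * N^c ≤ 1
    have hsplit : (N:ℝ) ^ ((1:ℝ)/2) = (N:ℝ) ^ (1/q) * (N:ℝ) ^ c := by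
      rw [← Real.rpow_add hNpos, hc]
      ring_nf
    rw [hsplit, ← mul_assoc] at this
    have hq' : (0:ℝ) < (N:ℝ) ^ (1/q) := Real.rpow_pos_of_pos hNpos _
    have hcle : α * (N:ℝ) ^ c ≤ 1 := by
      have h2 : α * (N:ℝ) ^ (1/q) * (N:ℝ) ^ c ≤ (N:ℝ) ^ (1/q) * 1 := by
        simpa using this
      nlinarith [Real.rpow_pos_of_pos hNpos c]
    have hgt : 1 < α * (N:ℝ) ^ c := by
      have : 1/α < ((fun x : ℝ => x ^ c) ∘ (Nat.cast : ℕ → ℝ)) N := hNc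
      simp only [Function.comp] at this
      calc (1:ℝ) = α * (1/α) := by field_simp
        _ < α * (N:ℝ) ^ c := by
            exact (mul_lt_mul_iff_right₀ hα).mpr this
    linarith
end
end
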